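/- arXiv:2211.03194 — 7 statements merged into one kernel-verified Lean document; each statement's English description precedes it below -/
import Mathlib

section
/- Consider the elastic-demand instance with effective walk-delay operator Ψ and inverse demand functions Θ_i, and construct the extended fixed-volume instance: for each i ∈ I add a new walk p̃_i, set 𝒫'_i := 𝒫_i ∪ {p̃_i} and 𝒫' := ⋃_i 𝒫'_i, choose B_{p̃_i} ≥ 0 with B_{p̃_i}·(t_f − t₀) > Q_i, and define Ψ' on walk inflows h' indexed by 𝒫' by Ψ'_p(h',t) := Ψ_p((h'_w)_{w∈𝒫},t) for p ∈ 𝒫 and Ψ'_{p̃_i}(h',t) := Θ_i(Σ_{p∈𝒫_i} ∫_{t₀}^{t_f} h'_p(t')dt'). Then: (i) if h' ∈ Λ'(Q) (the fixed-volume feasible set for the extended instance) is a dynamic equilibrium with fixed flow volumes and departure time choice w.r.t. Ψ', then, setting Q*_i := Σ_{p∈𝒫_i} ∫_{t₀}^{t_f} h'_p(t)dt and h* := (h'_p)_{p∈𝒫}, the pair (h*,Q*) is a dynamic equilibrium with elastic demands and departure time choice w.r.t. Ψ and Θ; and (ii) conversely, if (h*,Q*) is a dynamic equilibrium with elastic demands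 and departure time choice, then the extension h' of h* defined by h'_{p̃_i}(t) := (Q_i − Q*_i)/(t_f − t₀) for all t ∈ [t₀,t_f] is a dynamic equilibrium with fixed flow volumes and departure time choice in the extended instance. -/
open MeasureTheory Filter Set

noncomputable section

/-- The restriction of the Lebesgue measure to the planning horizon `[t₀, t_f]`. -/
def horizonMeasure (t0 tf : ℝ) : Measure ℝ := volume.restrict (Icc t0 tf)

/-- `f` is (a representative of) a nonnegative square-integrable function on `[t₀, t_f]`,
i.e. an element of `L²₊([t₀,t_f])`. -/
def L2nonneg (t0 tf : ℝ) (f : ℝ → ℝ) : Prop :=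
  MemLp f 2 (horizonMeasure t0 tf) ∧ 0 ≤ᵐ[horizonMeasure t0 tf] f

/-- A walk inflow: a vector of nonnegative L² functions on the horizon, one per walk. -/
def WalkInflow {P : Type*} (t0 tf : ℝ) (h : P → ℝ → ℝ) : Prop := ∀ p, L2nonneg t0 tf (h p)

variable {I P E : Type*}

/-- The (finite) set of walks belonging to commodity `i`. -/
def commWalks [Fintype P] [DecidableEq I] (comm : P → I) (i : I) : Finset P :=
  Finset.univ.filter fun p => comm p = i

/-- The set `Λ(Q)` of feasible walk inflows for fixed flow volumes `Q` with
inflow bounds `B`. -/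
def LambdaQ [Fintype P] [DecidableEq I] (t0 tf : ℝ) (comm : P → I) (B : P → ℝ)
    (Q : I → ℝ) : Set (P → ℝ → ℝ) :=
  {h | WalkInflow t0 tf h ∧
    (∀ i, ∑ p ∈ commWalks comm i, ∫ t, h p t ∂(horizonMeasure t0 tf) = Q i) ∧
    ∀ p, ∀ᵐ t ∂(horizonMeasure t0 tf), h p t ≤ B p}

/-- The set `Λ(r)` of feasible walk inflows for fixed network inflow rates `r`. -/
def LambdaR [Fintype P] [DecidableEq I] (t0 tf : ℝ) (comm : P → I)
    (r : I → ℝ → ℝ) : Set (P → ℝ → ℝ) :=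
  {h | WalkInflow t0 tf h ∧
    ∀ i, ∀ᵐ t ∂(horizonMeasure t0 tf), ∑ p ∈ commWalks comm i, h p t = r i t}

/-- The canonical scalar product `⟨f,g⟩ = Σ_p ∫ f_p(t) g_p(t) dt` on `L²([t₀,t_f])^𝒫`. -/
def inner2 [Fintype P] (t0 tf : ℝ) (f g : P → ℝ → ℝ) : ℝ :=
  ∑ p : P, ∫ t, f p t * g p t ∂(horizonMeasure t0 tf)

/-- Weak convergence of a sequence of walk inflows. -/
def WeakConvTo [Fintype P] (t0 tf : ℝ) (hn : ℕ → P → ℝ → ℝ) (h : P → ℝ → ℝ) : Prop :=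
  ∀ g : P → ℝ → ℝ, (∀ p, MemLp (g p) 2 (horizonMeasure t0 tf)) →
    Tendsto (fun n => inner2 t0 tf (hn n) g) atTop (nhds (inner2 t0 tf h g))

/-- Convergence in `L²`-norm on the horizon. -/
def L2Tendsto (t0 tf : ℝ) (fn : ℕ → ℝ → ℝ) (f : ℝ → ℝ) : Prop :=
  Tendsto (fun n => eLpNorm (fun t => fn n t - f t) 2 (horizonMeasure t0 tf)) atTop (nhds 0)

/-- Dynamic equilibrium with fixed inflow rates. -/
def IsDEFixedRates [Fintype P] [DecidableEq I] (t0 tf : ℝ) (comm : P → I) (r : I → ℝ → ℝ)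
    (Psi : (P → ℝ → ℝ) → P → ℝ → ℝ) (h : P → ℝ → ℝ) : Prop :=
  h ∈ LambdaR t0 tf comm r ∧
    ∀ p q, comm p = comm q →
      ∀ᵐ t ∂(horizonMeasure t0 tf), 0 < h p t → Psi h p t ≤ Psi h q t

/-- Dynamic equilibrium with fixed flow volumes and departure time choice. -/
def IsDEFixedVolume [Fintype P] [DecidableEq I] (t0 tf : ℝ) (comm : P → I) (B : P → ℝ)
    (Q : I → ℝ) (Psi : (P → ℝ → ℝ) → P → ℝ → ℝ) (h : P → ℝ → ℝ) : Prop :=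
  h ∈ LambdaQ t0 tf comm B Q ∧
    ∀ i, ∃ ν : ℝ, ∀ p, comm p = i →
      ∀ᵐ t ∂(horizonMeasure t0 tf),
        (0 < h p t → Psi h p t ≤ ν) ∧ (h p t < B p → ν ≤ Psi h p t)

/-- Dynamic equilibrium with elastic demands and departure time choice. -/
def IsDEElastic [Fintype P] [DecidableEq I] (t0 tf : ℝ) (comm : P → I) (B : P → ℝ)
    (Q : I → ℝ) (Psi : (P → ℝ → ℝ) → P → ℝ → ℝ) (Θ : I → ℝ → ℝ)
    (h : P → ℝ → ℝ) (Qstar : I → ℝ) : Prop :=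
  (∀ i, 0 ≤ Qstar i ∧ Qstar i ≤ Q i) ∧
  h ∈ LambdaQ t0 tf comm B Qstar ∧
  ∀ i, ∃ ν : ℝ,
    (∀ p, comm p = i → ∀ᵐ t ∂(horizonMeasure t0 tf),
      (0 < h p t → Psi h p t ≤ ν) ∧ (h p t < B p → ν ≤ Psi h p t)) ∧
    (Qstar i < Q i → ν = Θ i (Qstar i)) ∧
    (Qstar i = Q i → ν ≤ Θ i (Q i))

/-- The effective walk-delay operator of the extended (fixed-volume) instance obtained from an
elastic-demand instance: on original walks it is `Ψ`, on the new walk `p̃ᵢ` it is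
`Θᵢ` of the total volume of commodity `i` on its original walks. -/
def PsiExt [Fintype P] [DecidableEq I] (t0 tf : ℝ) (comm : P → I)
    (Psi : (P → ℝ → ℝ) → P → ℝ → ℝ) (Θ : I → ℝ → ℝ) :
    (P ⊕ I → ℝ → ℝ) → P ⊕ I → ℝ → ℝ := fun h' w t =>
  match w with
  | Sum.inl p => Psi (fun q => h' (Sum.inl q)) p t
  | Sum.inr i =>
      Θ i (∑ p ∈ commWalks comm i, ∫ s, h' (Sum.inl p) s ∂(horizonMeasure t0 tf))

/-! ## Side-constrained equilibria -/

/-- The basic requirements on an admissible γ-deviation `(q,γ,Δ)` from walk `p` at inflow `h`: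
`q` belongs to the same commodity as `p`, `γ ∈ L²₊([t₀,t_f])`, `γ ≤ h_p` a.e.,
`h_q(t) + γ(t−Δ) ≤ B_q` a.e., and the support of `γ(·−Δ)` is contained in `[t₀,t_f]`
up to a null set. -/
def ValidTriple (t0 tf : ℝ) (comm : P → I) (B : P → ℝ) (h : P → ℝ → ℝ)
    (p q : P) (γ : ℝ → ℝ) (Δ : ℝ) : Prop :=
  comm q = comm p ∧ L2nonneg t0 tf γ ∧
  (∀ᵐ t ∂(horizonMeasure t0 tf), γ t ≤ h p t) ∧
  (∀ᵐ t ∂(horizonMeasure t0 tf), h q t + γ (t - Δ) ≤ B q) ∧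
  (∀ᵐ t ∂(volume : Measure ℝ), γ (t - Δ) ≠ 0 → t ∈ Icc t0 tf)

/-- The set `U_p(h,t)` of admissible deviations `(q,Δ)` for walk `p` at time `t` under the
inflow `h`, given the correspondence `A` of admissible γ-deviations. -/
def UDev (t0 tf : ℝ) (A : (P → ℝ → ℝ) → P → Set (P × (ℝ → ℝ) × ℝ))
    (h : P → ℝ → ℝ) (p : P) (t : ℝ) : Set (P × ℝ) :=
  {qd | ∀ δ > (0:ℝ), ∀ ε > (0:ℝ), ∃ γ : ℝ → ℝ,
    L2nonneg t0 tf γ ∧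
    0 < ∫ s, γ s ∂(horizonMeasure t0 tf) ∧
    (∀ᵐ s ∂(horizonMeasure t0 tf), γ s ≤ ε) ∧
    (∀ᵐ s ∂(horizonMeasure t0 tf), γ s ≠ 0 → s ∈ Icc (t - δ) (t + δ)) ∧
    (qd.1, γ, qd.2) ∈ A h p}

/-- Side-constrained dynamic equilibrium (SCDE) w.r.t. the effective walk-delay operator
`Psi` (valued in a preorder, e.g. `ℝ` or `ℝ ∪ {∞}`), the constraint set `S` and the
correspondences `A` of admissible γ-deviations. -/
def IsSCDE {α : Type*} [Preorder α] (t0 tf : ℝ)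
    (Psi : (P → ℝ → ℝ) → P → ℝ → α) (S : Set (P → ℝ → ℝ))
    (A : (P → ℝ → ℝ) → P → Set (P × (ℝ → ℝ) × ℝ)) (h : P → ℝ → ℝ) : Prop :=
  h ∈ S ∧ ∀ p, ∀ t ∈ Icc t0 tf, ∀ q Δ, (q, Δ) ∈ UDev t0 tf A h p t →
    Psi h p t ≤ Psi h q (t + Δ)

/-- The walk inflow `H_{p→q}(h,γ,Δ)` obtained from `h` by the γ-deviation `(q,γ,Δ)`
from walk `p`. -/
def Hshift [DecidableEq P] (h : P → ℝ → ℝ) (p q : P) (γ : ℝ → ℝ) (Δ : ℝ) :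
    P → ℝ → ℝ := fun w t =>
  h w t + (if w = q then γ (t - Δ) else 0) - (if w = p then γ t else 0)

/-- The set `M(h)` of all walk inflows reachable from `h` by a single admissible
γ-deviation. -/
def MSet [DecidableEq P] (A : (P → ℝ → ℝ) → P → Set (P × (ℝ → ℝ) × ℝ))
    (h : P → ℝ → ℝ) : Set (P → ℝ → ℝ) :=
  {h' | ∃ p q γ Δ, (q, γ, Δ) ∈ A h p ∧ h' = Hshift h p q γ Δ}

/-- The tangent cone `T(A_p,h)` at `h` w.r.t. the correspondences `A`. -/
def TangentCone [Fintype P] [DecidableEq P] (t0 tf : ℝ)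
    (A : (P → ℝ → ℝ) → P → Set (P × (ℝ → ℝ) × ℝ)) (h : P → ℝ → ℝ) :
    Set (P → ℝ → ℝ) :=
  {v | (∀ p, MemLp (v p) 2 (horizonMeasure t0 tf)) ∧
    ∃ (hn : ℕ → P → ℝ → ℝ) (tn : ℕ → ℝ),
      (∀ n, hn n ∈ MSet A h) ∧ (∀ n, 0 < tn n) ∧
      Tendsto tn atTop (nhds 0) ∧
      ∀ p, Tendsto
        (fun n => eLpNorm (fun t => (hn n p t - h p t) / tn n - v p t) 2
          (horizonMeasure t0 tf)) atTop (nhds 0)}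

/-- The correspondences `A` are closed under rate-reduction at `h`. -/
def ClosedRateReduction (A : (P → ℝ → ℝ) → P → Set (P × (ℝ → ℝ) × ℝ))
    (h : P → ℝ → ℝ) : Prop :=
  ∀ p q γ Δ, (q, γ, Δ) ∈ A h p → ∀ lam ∈ Icc (0:ℝ) 1,
    (q, fun t => lam * γ t, Δ) ∈ A h p

/-- The correspondences `A` are closed under time-restriction at `h`. -/
def ClosedTimeRestriction (A : (P → ℝ → ℝ) → P → Set (P × (ℝ → ℝ) × ℝ))
    (h : P → ℝ → ℝ) : Prop :=
  ∀ p q γ Δ, (q, γ, Δ) ∈ A h p → ∀ J : Set ℝ, MeasurableSet J →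
    (q, J.indicator γ, Δ) ∈ A h p

/-- `S` is closed with respect to elementary directions (w.r.t. the correspondences `A`). -/
def ClosedElemDir (t0 tf : ℝ) (comm : P → I) (S : Set (P → ℝ → ℝ))
    (A : (P → ℝ → ℝ) → P → Set (P × (ℝ → ℝ) × ℝ)) : Prop :=
  ∀ h ∈ S, ∀ h' ∈ S, ∀ p q, comm p = comm q →
    ∀ J : Set ℝ, J ⊆ Icc t0 tf → MeasurableSet J → 0 < volume J →
      (∀ t ∈ J, h' p t < h p t ∧ h q t < h' q t) →
      ∃ t ∈ J, (q, (0:ℝ)) ∈ UDev t0 tf A h p t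

/-! ## Edge-load constraints and network loading -/

/-- The edge-load feasibility set `S = {h ∈ Λ(Q) : f_e(h,θ) ≤ c_e(θ) for all e and θ ≥ 0}`. -/
def SEdge [Fintype P] [DecidableEq I] (t0 tf : ℝ) (comm : P → I) (B : P → ℝ) (Q : I → ℝ)
    (f : (P → ℝ → ℝ) → E → ℝ → ℝ) (c : E → ℝ → ℝ) : Set (P → ℝ → ℝ) :=
  {h | h ∈ LambdaQ t0 tf comm B Q ∧ ∀ e θ, 0 ≤ θ → f h e θ ≤ c e θ}

/-- Strong LP-deviations: admissible γ-deviations whose alternative walk is strictly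
unsaturated at every entrance time. -/
def AsLP (t0 tf : ℝ) (comm : P → I) (B : P → ℝ)
    (len : P → ℕ) (edgeOf : P → ℕ → E)
    (τ : (P → ℝ → ℝ) → P → ℕ → ℝ → ℝ)
    (f : (P → ℝ → ℝ) → E → ℝ → ℝ) (c : E → ℝ → ℝ)
    (h : P → ℝ → ℝ) (p : P) : Set (P × (ℝ → ℝ) × ℝ) :=
  {d | ValidTriple t0 tf comm B h p d.1 d.2.1 d.2.2 ∧
    ∃ γ₀ : ℝ → ℝ, γ₀ =ᵐ[horizonMeasure t0 tf] d.2.1 ∧ (∀ s, s ∉ Icc t0 tf → γ₀ s = 0) ∧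
      ∀ t, γ₀ (t - d.2.2) ≠ 0 → ∀ j, 1 ≤ j → j ≤ len d.1 →
        f h (edgeOf d.1 j) (τ h d.1 j t) < c (edgeOf d.1 j) (τ h d.1 j t)}

/-- Weak LP-deviations: admissible γ-deviations whose alternative walk is strictly
unsaturated during the whole traversal of each of its edges. -/
def AwLP (t0 tf : ℝ) (comm : P → I) (B : P → ℝ)
    (len : P → ℕ) (edgeOf : P → ℕ → E)
    (τ : (P → ℝ → ℝ) → P → ℕ → ℝ → ℝ)
    (f : (P → ℝ → ℝ) → E → ℝ → ℝ) (c : E → ℝ → ℝ)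
    (h : P → ℝ → ℝ) (p : P) : Set (P × (ℝ → ℝ) × ℝ) :=
  {d | ValidTriple t0 tf comm B h p d.1 d.2.1 d.2.2 ∧
    ∃ γ₀ : ℝ → ℝ, γ₀ =ᵐ[horizonMeasure t0 tf] d.2.1 ∧ (∀ s, s ∉ Icc t0 tf → γ₀ s = 0) ∧
      ∀ t, γ₀ (t - d.2.2) ≠ 0 → ∀ j, 1 ≤ j → j ≤ len d.1 →
        ∀ θ ∈ Icc (τ h d.1 j t) (τ h d.1 (j+1) t),
          f h (edgeOf d.1 j) θ < c (edgeOf d.1 j) θ}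

/-- Strong MNS-deviations: strong LP-deviations together with deviations without time
shift whose alternative walk is strictly unsaturated (at entrance times) outside a common
prefix with the original walk. -/
def AsMNS (t0 tf : ℝ) (comm : P → I) (B : P → ℝ)
    (len : P → ℕ) (edgeOf : P → ℕ → E)
    (τ : (P → ℝ → ℝ) → P → ℕ → ℝ → ℝ)
    (f : (P → ℝ → ℝ) → E → ℝ → ℝ) (c : E → ℝ → ℝ)
    (h : P → ℝ → ℝ) (p : P) : Set (P × (ℝ → ℝ) × ℝ) :=
  AsLP t0 tf comm B len edgeOf τ f c h p ∪
  {d | d.2.2 = 0 ∧ ValidTriple t0 tf comm B h p d.1 d.2.1 d.2.2 ∧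
    ∃ k, k ≤ len p ∧ k ≤ len d.1 ∧ (∀ j, 1 ≤ j → j ≤ k → edgeOf p j = edgeOf d.1 j) ∧
      ∃ γ₀ : ℝ → ℝ, γ₀ =ᵐ[horizonMeasure t0 tf] d.2.1 ∧ (∀ s, s ∉ Icc t0 tf → γ₀ s = 0) ∧
        ∀ t, γ₀ t ≠ 0 → ∀ j, k < j → j ≤ len d.1 →
          f h (edgeOf d.1 j) (τ h d.1 j t) < c (edgeOf d.1 j) (τ h d.1 j t)}

/-- Weak MNS-deviations: weak LP-deviations together with deviations without time shift
whose alternative walk is strictly unsaturated (during edge traversal) outside a common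
prefix with the original walk. -/
def AwMNS (t0 tf : ℝ) (comm : P → I) (B : P → ℝ)
    (len : P → ℕ) (edgeOf : P → ℕ → E)
    (τ : (P → ℝ → ℝ) → P → ℕ → ℝ → ℝ)
    (f : (P → ℝ → ℝ) → E → ℝ → ℝ) (c : E → ℝ → ℝ)
    (h : P → ℝ → ℝ) (p : P) : Set (P × (ℝ → ℝ) × ℝ) :=
  AwLP t0 tf comm B len edgeOf τ f c h p ∪
  {d | d.2.2 = 0 ∧ ValidTriple t0 tf comm B h p d.1 d.2.1 d.2.2 ∧
    ∃ k, k ≤ len p ∧ k ≤ len d.1 ∧ (∀ j, 1 ≤ j → j ≤ k → edgeOf p j = edgeOf d.1 j) ∧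
      ∃ γ₀ : ℝ → ℝ, γ₀ =ᵐ[horizonMeasure t0 tf] d.2.1 ∧ (∀ s, s ∉ Icc t0 tf → γ₀ s = 0) ∧
        ∀ t, γ₀ t ≠ 0 → ∀ j, k < j → j ≤ len d.1 →
          ∀ θ ∈ Icc (τ h d.1 j t) (τ h d.1 (j+1) t),
            f h (edgeOf d.1 j) θ < c (edgeOf d.1 j) θ}

lemma sum_commWalks_ext {I P : Type*} [Fintype I] [Fintype P] [DecidableEq I]
    (comm : P → I) (i : I) (F : P ⊕ I → ℝ) :
    ∑ w ∈ commWalks (Sum.elim comm id) i, F w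
      = (∑ p ∈ commWalks comm i, F (Sum.inl p)) + F (Sum.inr i) := by
  classical
  rw [commWalks, commWalks, Finset.sum_filter, Finset.sum_filter, Fintype.sum_sum_type]
  simp [Finset.sum_ite_eq', Fintype.sum_ite_eq', Fintype.sum_ite_eq]
  rw [Finset.sum_eq_single i (fun b _ hb => by simp [hb]) (by simp)]
  simp
  exact Finset.sum_congr rfl fun a _ => by congr

theorem stmt0 {I P : Type*} [Fintype I] [Fintype P] [DecidableEq I]
    (t0 tf : ℝ) (ht0 : 0 ≤ t0) (htf : t0 < tf)
    (comm : P → I) (hcomm : ∀ i, ∃ p, comm p = i)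
    (B : P → ℝ) (hB : ∀ p, 0 ≤ B p)
    (Q : I → ℝ) (hQ : ∀ i, 0 ≤ Q i)
    (Psi : (P → ℝ → ℝ) → P → ℝ → ℝ)
    (Θ : I → ℝ → ℝ)
    (hΘ : ∀ i, ∀ x ∈ Icc 0 (Q i), ∀ y ∈ Icc 0 (Q i), x ≤ y → Θ i y ≤ Θ i x)
    (Btil : I → ℝ) (hBtil0 : ∀ i, 0 ≤ Btil i)
    (hBtil : ∀ i, Q i < Btil i * (tf - t0)) :
    (∀ h' : P ⊕ I → ℝ → ℝ,
      IsDEFixedVolume t0 tf (Sum.elim comm id) (Sum.elim B Btil) Q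
        (PsiExt t0 tf comm Psi Θ) h' →
      IsDEElastic t0 tf comm B Q Psi Θ (fun p => h' (Sum.inl p))
        (fun i => ∑ p ∈ commWalks comm i,
          ∫ t, h' (Sum.inl p) t ∂(horizonMeasure t0 tf)))
    ∧
    (∀ (h : P → ℝ → ℝ) (Qstar : I → ℝ),
      IsDEElastic t0 tf comm B Q Psi Θ h Qstar →
      IsDEFixedVolume t0 tf (Sum.elim comm id) (Sum.elim B Btil) Q
        (PsiExt t0 tf comm Psi Θ)
        (Sum.elim h (fun i _ => (Q i - Qstar i) / (tf - t0)))) := by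
  classical
  have htdiff : (0:ℝ) < tf - t0 := sub_pos.2 htf
  have hμuniv : (horizonMeasure t0 tf) Set.univ = ENNReal.ofReal (tf - t0) := by
    simp [horizonMeasure, Real.volume_Icc]
  haveI : IsFiniteMeasure (horizonMeasure t0 tf) :=
    ⟨by rw [hμuniv]; exact ENNReal.ofReal_lt_top⟩
  have hconst : ∀ c : ℝ, ∫ _t, c ∂(horizonMeasure t0 tf) = (tf - t0) * c := by
    intro c
    rw [integral_const, measureReal_def, hμuniv, ENNReal.toReal_ofReal htdiff.le, smul_eq_mul]
  constructor
  · -- (i) extended fixed-volume equilibrium yields elastic equilibrium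
    intro h' hde
    obtain ⟨⟨hfeas, hsum, hbound⟩, heq⟩ := hde
    set h : P → ℝ → ℝ := fun p => h' (Sum.inl p) with hh
    set Qs : I → ℝ := fun i => ∑ p ∈ commWalks comm i,
      ∫ t, h' (Sum.inl p) t ∂(horizonMeasure t0 tf) with hQs
    have hint_nonneg : ∀ w, 0 ≤ ∫ t, h' w t ∂(horizonMeasure t0 tf) := fun w =>
      integral_nonneg_of_ae (hfeas w).2
    have hQs_nonneg : ∀ i, 0 ≤ Qs i := fun i =>
      Finset.sum_nonneg fun p _ => hint_nonneg (Sum.inl p)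
    have hQi : ∀ i, Qs i + ∫ t, h' (Sum.inr i) t ∂(horizonMeasure t0 tf) = Q i := by
      intro i
      have := hsum i
      rwa [sum_commWalks_ext comm i] at this
    have hQsle : ∀ i, Qs i ≤ Q i := fun i => by
      have := hQi i; have := hint_nonneg (Sum.inr i); linarith
    have hintQ : ∀ i, ∫ t, h' (Sum.inr i) t ∂(horizonMeasure t0 tf) = Q i - Qs i :=
      fun i => by have := hQi i; linarith
    refine ⟨fun i => ⟨hQs_nonneg i, hQsle i⟩,
      ⟨fun p => hfeas (Sum.inl p), fun i => rfl, fun p => hbound (Sum.inl p)⟩, ?_⟩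
    intro i
    obtain ⟨ν, hν⟩ := heq i
    have htri := hν (Sum.inr i) rfl
    simp only [PsiExt, Sum.elim_inr] at htri
    -- ν ≤ Θ i (Qs i) always
    have hA : ν ≤ Θ i (Qs i) := by
      by_contra hcon
      push_neg at hcon
      have hge : ∀ᵐ t ∂(horizonMeasure t0 tf), Btil i ≤ h' (Sum.inr i) t := by
        filter_upwards [htri] with t ht
        by_contra hx
        push_neg at hx
        exact absurd (ht.2 hx) (not_le.2 hcon)
      have hble := hbound (Sum.inr i)
      have hae : h' (Sum.inr i) =ᵐ[horizonMeasure t0 tf] fun _ => Btil i := by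
        filter_upwards [hge, hble] with t h1 h2
        exact le_antisymm h2 h1
      have : ∫ t, h' (Sum.inr i) t ∂(horizonMeasure t0 tf) = (tf - t0) * Btil i := by
        rw [integral_congr_ae hae, hconst]
      rw [hintQ i] at this
      have := hBtil i
      have := hQs_nonneg i
      nlinarith
    -- if Qs i < Q i then Θ i (Qs i) ≤ ν
    have hB' : Qs i < Q i → Θ i (Qs i) ≤ ν := by
      intro hlt
      by_contra hcon
      push_neg at hcon
      have hle0 : ∀ᵐ t ∂(horizonMeasure t0 tf), h' (Sum.inr i) t ≤ 0 := by
        filter_upwards [htri] with t ht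
        by_contra hx
        push_neg at hx
        exact absurd (ht.1 hx) (not_le.2 hcon)
      have hae : h' (Sum.inr i) =ᵐ[horizonMeasure t0 tf] fun _ => (0:ℝ) := by
        filter_upwards [hle0, (hfeas (Sum.inr i)).2] with t h1 h2
        exact le_antisymm h1 h2
      have : ∫ t, h' (Sum.inr i) t ∂(horizonMeasure t0 tf) = 0 := by
        rw [integral_congr_ae hae, integral_zero]
      rw [hintQ i] at this
      linarith
    refine ⟨ν, ?_, fun hlt => le_antisymm hA (hB' hlt), fun heqQ => ?_⟩
    · intro p hp
      have := hν (Sum.inl p) (by simpa using hp)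
      simpa [PsiExt] using this
    · have : Qs i = Q i := heqQ
      rw [← this]
      exact hA
  · -- (ii) elastic equilibrium yields extended fixed-volume equilibrium
    intro h Qs hel
    obtain ⟨hQrange, ⟨hfeas, hsum, hbound⟩, heq⟩ := hel
    set c : I → ℝ := fun i => (Q i - Qs i) / (tf - t0) with hc
    have hc_nonneg : ∀ i, 0 ≤ c i := fun i =>
      div_nonneg (sub_nonneg.2 (hQrange i).2) htdiff.le
    have hc_lt : ∀ i, c i < Btil i := fun i => by
      rw [hc, div_lt_iff₀ htdiff]
      have := hBtil i
      have := (hQrange i).1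
      linarith
    have hint_c : ∀ i, ∫ _t, c i ∂(horizonMeasure t0 tf) = Q i - Qs i := by
      intro i
      rw [hconst, hc, mul_div_cancel₀ _ htdiff.ne']
    constructor
    · refine ⟨?_, ?_, ?_⟩
      · intro w
        cases w with
        | inl p => exact hfeas p
        | inr i =>
          exact ⟨memLp_const _, Eventually.of_forall fun _ => hc_nonneg i⟩
      · intro i
        rw [sum_commWalks_ext comm i]
        have h1 : ∑ p ∈ commWalks comm i,
            ∫ t, (Sum.elim h fun i _ => (Q i - Qs i) / (tf - t0)) (Sum.inl p) t
              ∂(horizonMeasure t0 tf) = Qs i := hsum i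
        rw [h1]
        have h2 : ∫ t, (Sum.elim h fun i _ => (Q i - Qs i) / (tf - t0)) (Sum.inr i) t
            ∂(horizonMeasure t0 tf) = Q i - Qs i := hint_c i
        rw [h2]
        ring
      · intro w
        cases w with
        | inl p => exact hbound p
        | inr i => exact Eventually.of_forall fun _ => (hc_lt i).le
    · intro i
      obtain ⟨ν, hν, hν1, hν2⟩ := heq i
      have hsumQ : ∑ p ∈ commWalks comm i,
          ∫ s, h p s ∂(horizonMeasure t0 tf) = Qs i := hsum i
      have hν_le : ν ≤ Θ i (Qs i) := by
        rcases lt_or_eq_of_le (hQrange i).2 with hlt | heqQ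
        · exact le_of_eq (hν1 hlt)
        · rw [heqQ]; exact hν2 heqQ
      have hν_ge : 0 < c i → Θ i (Qs i) ≤ ν := by
        intro h0
        have h1 : 0 < Q i - Qs i := by
          by_contra hx
          push_neg at hx
          have : c i ≤ 0 := div_nonpos_iff.mpr (Or.inr ⟨hx, htdiff.le⟩)
          linarith
        exact le_of_eq (hν1 (by linarith)).symm
      refine ⟨ν, ?_⟩
      intro w hw
      cases w with
      | inl p =>
        have hp : comm p = i := hw
        have := hν p hp
        simpa [PsiExt] using this
      | inr j =>
        have hj : j = i := hw
        subst hj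
        refine Eventually.of_forall fun t => ⟨fun h0 => ?_, fun _ => ?_⟩
        · have := hν_ge h0
          simpa [PsiExt, hsumQ] using this
        · simpa [PsiExt, hsumQ] using hν_le

end
end

section
/- Assume that for every p ∈ 𝒫 and every h ∈ Λ(r) the function Ψ_p(h,·) is real-valued and bounded. Then a walk inflow h* ∈ Λ(r) is a dynamic equilibrium with fixed inflow rates if and only if h* solves the variational inequality VI(Ψ,r): ⟨Ψ(h*), h − h*⟩ ≥ 0 for all h ∈ Λ(r). -/
open MeasureTheory Filter Set

noncomputable section

variable {I P E : Type*}

instance horizonFinite (t0 tf : ℝ) : IsFiniteMeasure (horizonMeasure t0 tf) := by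
  constructor
  rw [horizonMeasure, Measure.restrict_apply_univ, Real.volume_Icc]
  exact ENNReal.ofReal_lt_top

lemma aux_mem_ae (t0 tf : ℝ) : ∀ᵐ t ∂(horizonMeasure t0 tf), t ∈ Icc t0 tf := by
  rw [horizonMeasure]; exact ae_restrict_mem measurableSet_Icc

lemma aux_integrable {t0 tf : ℝ} {ψ f : ℝ → ℝ}
    (hψ : AEStronglyMeasurable ψ (horizonMeasure t0 tf))
    (hM : ∃ M, ∀ t ∈ Icc t0 tf, |ψ t| ≤ M) (hf : MemLp f 2 (horizonMeasure t0 tf)) :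
    Integrable (fun t => ψ t * f t) (horizonMeasure t0 tf) := by
  obtain ⟨M, hM⟩ := hM
  have hfi : Integrable f (horizonMeasure t0 tf) := hf.integrable (by norm_num)
  refine hfi.bdd_mul (c := M) hψ ?_
  filter_upwards [aux_mem_ae t0 tf] with t ht
  simpa [Real.norm_eq_abs] using hM t ht

lemma aux_meas_inf' {P : Type*} (s : Finset P) (hs : s.Nonempty) (f : P → ℝ → ℝ)
    (hf : ∀ p, Measurable (f p)) : Measurable (fun t => s.inf' hs (fun p => f p t)) := by
  induction hs using Finset.Nonempty.cons_induction with
  | singleton a => simpa using hf a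
  | cons a s h hs ih =>
      simp only [Finset.inf'_cons (H := hs)]
      exact (hf a).min ih

theorem stmt1 {I P : Type*} [Fintype I] [Fintype P] [DecidableEq I]
    (t0 tf : ℝ) (ht0 : 0 ≤ t0) (htf : t0 < tf)
    (comm : P → I) (hcomm : ∀ i, ∃ p, comm p = i)
    (r : I → ℝ → ℝ) (hr : ∀ i, L2nonneg t0 tf (r i))
    (Psi : (P → ℝ → ℝ) → P → ℝ → ℝ)
    (hmeas : ∀ h p, Measurable (Psi h p))
    (hbd : ∀ h ∈ LambdaR t0 tf comm r, ∀ p, ∃ M, ∀ t ∈ Icc t0 tf, |Psi h p t| ≤ M)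
    (hstar : P → ℝ → ℝ) (hmem : hstar ∈ LambdaR t0 tf comm r) :
    IsDEFixedRates t0 tf comm r Psi hstar ↔
      ∀ h ∈ LambdaR t0 tf comm r,
        0 ≤ inner2 t0 tf (Psi hstar) (fun p t => h p t - hstar p t) := by
  classical
  obtain ⟨hWI, hsum⟩ := hmem
  have hmemfull : hstar ∈ LambdaR t0 tf comm r := ⟨hWI, hsum⟩
  set μ := horizonMeasure t0 tf with hμdef
  constructor
  · rintro ⟨-, heq⟩ h hh
    obtain ⟨hWI', hsum'⟩ := hh
    have hne : ∀ i : I, (commWalks comm i).Nonempty := by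
      intro i
      obtain ⟨p, hp⟩ := hcomm i
      exact ⟨p, by simp [commWalks, hp]⟩
    set ν : I → ℝ → ℝ := fun i t => (commWalks comm i).inf' (hne i) (fun p => Psi hstar p t)
      with hνdef
    have hνmeas : ∀ i, Measurable (ν i) := fun i =>
      aux_meas_inf' _ (hne i) _ (fun p => hmeas hstar p)
    have hνbd : ∀ i, ∃ M, ∀ t ∈ Icc t0 tf, |ν i t| ≤ M := by
      intro i
      choose M hM using hbd hstar hmemfull
      refine ⟨(commWalks comm i).sup' (hne i) M, fun t ht => ?_⟩
      obtain ⟨p, hp, hpe⟩ := Finset.exists_mem_eq_inf' (hne i) (fun p => Psi hstar p t)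
      calc |ν i t| = |Psi hstar p t| := by rw [hνdef]; simp only []; rw [hpe]
        _ ≤ M p := hM p t ht
        _ ≤ _ := Finset.le_sup' M hp
    have hνle : ∀ p t, ν (comm p) t ≤ Psi hstar p t := by
      intro p t
      exact Finset.inf'_le _ (by simp [commWalks])
    have hint : ∀ (ψ : ℝ → ℝ), Measurable ψ → (∃ M, ∀ t ∈ Icc t0 tf, |ψ t| ≤ M) →
        ∀ (f : ℝ → ℝ), MemLp f 2 μ → Integrable (fun t => ψ t * f t) μ := fun ψ h1 h2 f h3 =>
      aux_integrable h1.aestronglyMeasurable h2 h3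
    have intΨh : ∀ p, Integrable (fun t => Psi hstar p t * h p t) μ :=
      fun p => hint _ (hmeas hstar p) (hbd hstar hmemfull p) _ (hWI' p).1
    have intΨhs : ∀ p, Integrable (fun t => Psi hstar p t * hstar p t) μ :=
      fun p => hint _ (hmeas hstar p) (hbd hstar hmemfull p) _ (hWI p).1
    have intνh : ∀ p, Integrable (fun t => ν (comm p) t * h p t) μ :=
      fun p => hint _ (hνmeas _) (hνbd _) _ (hWI' p).1
    have intνhs : ∀ p, Integrable (fun t => ν (comm p) t * hstar p t) μ :=
      fun p => hint _ (hνmeas _) (hνbd _) _ (hWI p).1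
    have key : ∀ (F : P → ℝ → ℝ), WalkInflow t0 tf F →
        (∀ i, ∀ᵐ t ∂μ, ∑ p ∈ commWalks comm i, F p t = r i t) →
        ∑ p : P, ∫ t, ν (comm p) t * F p t ∂μ = ∑ i : I, ∫ t, ν i t * r i t ∂μ := by
      intro F hF hFr
      rw [← Finset.sum_fiberwise Finset.univ comm (fun p => ∫ t, ν (comm p) t * F p t ∂μ)]
      refine Finset.sum_congr rfl fun i _ => ?_
      have h1 : ∑ p ∈ Finset.univ.filter (fun p => comm p = i),
            ∫ t, ν (comm p) t * F p t ∂μ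
          = ∑ p ∈ commWalks comm i, ∫ t, ν i t * F p t ∂μ := by
        refine Finset.sum_congr rfl fun p hp => ?_
        have hpc : comm p = i := by simpa [commWalks] using hp
        rw [hpc]
      rw [h1, ← integral_finset_sum]
      · refine integral_congr_ae ?_
        filter_upwards [hFr i] with t ht
        rw [← Finset.mul_sum, ht]
      · exact fun p _ => hint (ν i) (hνmeas i) (hνbd i) (F p) (hF p).1
    have step1 : inner2 t0 tf (Psi hstar) (fun p t => h p t - hstar p t)
        = (∑ p : P, ∫ t, Psi hstar p t * h p t ∂μ)
          - ∑ p : P, ∫ t, Psi hstar p t * hstar p t ∂μ := by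
      rw [inner2, ← Finset.sum_sub_distrib]
      refine Finset.sum_congr rfl fun p _ => ?_
      rw [← integral_sub (intΨh p) (intΨhs p)]
      refine integral_congr_ae (Eventually.of_forall fun t => ?_)
      ring
    have step2 : ∑ p : P, ∫ t, ν (comm p) t * h p t ∂μ
        ≤ ∑ p : P, ∫ t, Psi hstar p t * h p t ∂μ := by
      refine Finset.sum_le_sum fun p _ => ?_
      refine integral_mono_ae (intνh p) (intΨh p) ?_
      filter_upwards [(hWI' p).2] with t ht
      exact mul_le_mul_of_nonneg_right (hνle p t) ht
    have step3 : ∀ p : P, ∫ t, Psi hstar p t * hstar p t ∂μ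
        = ∫ t, ν (comm p) t * hstar p t ∂μ := by
      intro p
      have hq : ∀ᵐ t ∂μ, ∀ q : P, comm p = comm q →
          (0 < hstar p t → Psi hstar p t ≤ Psi hstar q t) := by
        rw [ae_all_iff]
        intro q
        by_cases hc : comm p = comm q
        · filter_upwards [heq p q hc] with t ht _
          exact ht
        · exact Eventually.of_forall fun t hcon => absurd hcon hc
      refine integral_congr_ae ?_
      filter_upwards [hq, (hWI p).2] with t ht hpos
      have hpos' : (0:ℝ) ≤ hstar p t := hpos
      rcases eq_or_lt_of_le hpos' with h0 | h0
      · rw [← h0, mul_zero, mul_zero]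
      · have h1 : Psi hstar p t ≤ ν (comm p) t := by
          refine Finset.le_inf' _ _ fun q hq' => ?_
          have hqc : comm q = comm p := by simpa [commWalks] using hq'
          exact ht q hqc.symm h0
        rw [le_antisymm h1 (hνle p t)]
    have step4 : ∑ p : P, ∫ t, Psi hstar p t * hstar p t ∂μ
        = ∑ p : P, ∫ t, ν (comm p) t * hstar p t ∂μ :=
      Finset.sum_congr rfl fun p _ => step3 p
    have step5 := key h hWI' hsum'
    have step6 := key hstar hWI hsum
    rw [step1]
    linarith [step2, step4, step5, step6]
  · intro hVI
    refine ⟨hmemfull, fun p q hpq => ?_⟩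
    by_contra hcon
    have hpq' : p ≠ q := by
      rintro rfl
      exact hcon (Eventually.of_forall fun t _ => le_refl _)
    obtain ⟨f, hfmeas, hfeq⟩ : ∃ f : ℝ → ℝ, Measurable f ∧ hstar p =ᵐ[μ] f :=
      ⟨(hWI p).1.aestronglyMeasurable.mk _,
        (hWI p).1.aestronglyMeasurable.stronglyMeasurable_mk.measurable,
        (hWI p).1.aestronglyMeasurable.ae_eq_mk⟩
    set E : Set ℝ := {t | 0 < f t ∧ Psi hstar q t < Psi hstar p t} with hEdef
    have hEmeas : MeasurableSet E :=
      (measurableSet_lt measurable_const hfmeas).inter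
        (measurableSet_lt (hmeas hstar q) (hmeas hstar p))
    have hEpos : μ E ≠ 0 := by
      intro h0
      apply hcon
      have hae : ∀ᵐ t ∂μ, t ∉ E := measure_eq_zero_iff_ae_notMem.mp h0
      filter_upwards [hae, hfeq] with t ht hft hpos
      by_contra hlt
      exact ht ⟨hft ▸ hpos, not_le.mp hlt⟩
    set g : ℝ → ℝ := E.indicator (hstar p) with hgdef
    have hgmem : MemLp g 2 μ := (hWI p).1.indicator hEmeas
    have hgnn : ∀ᵐ t ∂μ, 0 ≤ g t := by
      filter_upwards [(hWI p).2] with t ht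
      have ht' : (0:ℝ) ≤ hstar p t := ht
      by_cases hE : t ∈ E
      · rw [hgdef, Set.indicator_of_mem hE]; exact ht'
      · rw [hgdef, Set.indicator_of_notMem hE]
    have hgle : ∀ᵐ t ∂μ, g t ≤ hstar p t := by
      filter_upwards [(hWI p).2] with t ht
      have ht' : (0:ℝ) ≤ hstar p t := ht
      by_cases hE : t ∈ E
      · rw [hgdef, Set.indicator_of_mem hE]
      · rw [hgdef, Set.indicator_of_notMem hE]; exact ht'
    set hdev : P → ℝ → ℝ := fun w t =>
      hstar w t + (if w = q then g t else 0) - (if w = p then g t else 0) with hdevdef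
    have hdevmem : hdev ∈ LambdaR t0 tf comm r := by
      refine ⟨fun w => ⟨?_, ?_⟩, ?_⟩
      · have h1 : MemLp (fun t => (if w = q then g t else 0 : ℝ)) 2 μ := by
          by_cases h1 : w = q
          · simpa [h1] using hgmem
          · simpa [h1] using (zero_memLp : MemLp (fun _ : ℝ => (0:ℝ)) 2 μ)
        have h2 : MemLp (fun t => (if w = p then g t else 0 : ℝ)) 2 μ := by
          by_cases h2 : w = p
          · simpa [h2] using hgmem
          · simpa [h2] using (zero_memLp : MemLp (fun _ : ℝ => (0:ℝ)) 2 μ)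
        exact ((hWI w).1.add h1).sub h2
      · by_cases h1 : w = p
        · subst h1
          filter_upwards [(hWI w).2, hgle] with t h2 h3
          have h2' : (0:ℝ) ≤ hstar w t := h2
          have he : hdev w t = hstar w t + 0 - g t := by simp [hdevdef, hpq']
          show (0:ℝ) ≤ hdev w t
          rw [he]; linarith
        · by_cases h2 : w = q
          · subst h2
            filter_upwards [(hWI w).2, hgnn] with t h3 h4
            have h3' : (0:ℝ) ≤ hstar w t := h3
            have he : hdev w t = hstar w t + g t - 0 := by simp [hdevdef, Ne.symm hpq']
            show (0:ℝ) ≤ hdev w t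
            rw [he]; linarith
          · filter_upwards [(hWI w).2] with t h3
            have h3' : (0:ℝ) ≤ hstar w t := h3
            have he : hdev w t = hstar w t + 0 - 0 := by simp [hdevdef, h1, h2]
            show (0:ℝ) ≤ hdev w t
            rw [he]; linarith
      · intro i
        filter_upwards [hsum i] with t ht
        have hrw : ∀ w ∈ commWalks comm i, hdev w t
            = hstar w t + (if w = q then g t else 0) - (if w = p then g t else 0) :=
          fun w _ => rfl
        rw [Finset.sum_congr rfl hrw, Finset.sum_sub_distrib, Finset.sum_add_distrib,
          Finset.sum_ite_eq', Finset.sum_ite_eq']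
        have hmemiff : (q ∈ commWalks comm i) ↔ (p ∈ commWalks comm i) := by
          simp [commWalks, hpq]
        by_cases hp : p ∈ commWalks comm i
        · rw [if_pos hp, if_pos (hmemiff.mpr hp), ht]; ring
        · rw [if_neg hp, if_neg (fun hq' => hp (hmemiff.mp hq')), ht]; ring
    have intΨg : ∀ w : P, Integrable (fun t => Psi hstar w t * g t) μ := fun w =>
      aux_integrable (hmeas hstar w).aestronglyMeasurable (hbd hstar hmemfull w) hgmem
    have hterm : ∀ w : P, (∫ t, Psi hstar w t * (hdev w t - hstar w t) ∂μ)
        = (if w = q then ∫ t, Psi hstar q t * g t ∂μ else 0)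
          - (if w = p then ∫ t, Psi hstar p t * g t ∂μ else 0) := by
      intro w
      by_cases h1 : w = q
      · subst h1
        rw [if_pos rfl, if_neg (Ne.symm hpq'), sub_zero]
        refine integral_congr_ae (Eventually.of_forall fun t => ?_)
        have he : hdev w t = hstar w t + g t - 0 := by simp [hdevdef, Ne.symm hpq']
        simp only [he]; ring
      · by_cases h2 : w = p
        · subst h2
          rw [if_neg h1, if_pos rfl, zero_sub, ← integral_neg]
          refine integral_congr_ae (Eventually.of_forall fun t => ?_)
          have he : hdev w t = hstar w t + 0 - g t := by simp [hdevdef, h1]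
          simp only [he]; ring
        · rw [if_neg h1, if_neg h2, sub_zero]
          have : ∀ t : ℝ, Psi hstar w t * (hdev w t - hstar w t) = 0 := by
            intro t
            have he : hdev w t = hstar w t + 0 - 0 := by simp [hdevdef, h1, h2]
            rw [he]; ring
          simp only [this, integral_zero]
    have hIsum : inner2 t0 tf (Psi hstar) (fun w t => hdev w t - hstar w t)
        = ∫ t, (Psi hstar q t - Psi hstar p t) * g t ∂μ := by
      rw [inner2]
      calc ∑ w : P, ∫ t, Psi hstar w t * (hdev w t - hstar w t) ∂μ
          = ∑ w : P, ((if w = q then ∫ t, Psi hstar q t * g t ∂μ else 0)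
              - (if w = p then ∫ t, Psi hstar p t * g t ∂μ else 0)) :=
            Finset.sum_congr rfl fun w _ => hterm w
        _ = (∫ t, Psi hstar q t * g t ∂μ) - ∫ t, Psi hstar p t * g t ∂μ := by
            rw [Finset.sum_sub_distrib, Finset.sum_ite_eq', Finset.sum_ite_eq']
            simp
        _ = _ := by
            rw [← integral_sub (intΨg q) (intΨg p)]
            exact integral_congr_ae (Eventually.of_forall fun t => by ring)
    have hVIval := hVI hdev hdevmem
    rw [hIsum] at hVIval
    set φ : ℝ → ℝ := fun t => (Psi hstar q t - Psi hstar p t) * g t with hφdef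
    have hφint : Integrable φ μ := by
      obtain ⟨Mq, hMq⟩ := hbd hstar hmemfull q
      obtain ⟨Mp, hMp⟩ := hbd hstar hmemfull p
      refine aux_integrable ((hmeas hstar q).sub (hmeas hstar p)).aestronglyMeasurable
        ⟨Mq + Mp, fun t ht => ?_⟩ hgmem
      calc |Psi hstar q t - Psi hstar p t| ≤ |Psi hstar q t| + |Psi hstar p t| :=
            abs_sub _ _
        _ ≤ Mq + Mp := add_le_add (hMq t ht) (hMp t ht)
    have hφ0 : ∀ᵐ t ∂μ, φ t ≤ 0 := by
      filter_upwards [hgnn] with t ht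
      by_cases hE : t ∈ E
      · have hE' : Psi hstar q t < Psi hstar p t := hE.2
        have hle : Psi hstar q t - Psi hstar p t ≤ 0 := by linarith
        exact mul_nonpos_iff.2 (Or.inr ⟨hle, ht⟩)
      · have : g t = 0 := by rw [hgdef]; exact Set.indicator_of_notMem hE _
        rw [hφdef]; simp only []; rw [this, mul_zero]
    have hφeq0 : φ =ᵐ[μ] 0 := by
      have hnonneg : 0 ≤ᵐ[μ] (fun t => -φ t) := by
        filter_upwards [hφ0] with t ht
        simpa using ht
      have hint' : Integrable (fun t => -φ t) μ := hφint.neg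
      have h0 : ∫ t, -φ t ∂μ = 0 := by
        have ha : ∫ t, -φ t ∂μ ≤ 0 := by
          rw [integral_neg]
          linarith [hVIval]
        have hb : 0 ≤ ∫ t, -φ t ∂μ := integral_nonneg_of_ae hnonneg
        linarith
      have hres := (integral_eq_zero_iff_of_nonneg_ae hnonneg hint').mp h0
      filter_upwards [hres] with t ht
      have : -φ t = 0 := ht
      simpa using neg_eq_zero.mp this
    have hfreq : ∃ᵐ t ∂μ, t ∈ E := frequently_ae_mem_iff.mpr hEpos
    obtain ⟨t, htE, htφ, htf⟩ := (hfreq.and_eventually (hφeq0.and hfeq)).exists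
    have h1 : 0 < f t := htE.1
    have h2 : Psi hstar q t < Psi hstar p t := htE.2
    have hg : g t = hstar p t := by rw [hgdef]; exact Set.indicator_of_mem htE _
    have hgpos : 0 < g t := by rw [hg, htf]; exact h1
    have hφneg : φ t < 0 := mul_neg_of_neg_of_pos (by linarith) hgpos
    have hφz : φ t = 0 := htφ
    linarith

end
end

section
/- Assume that for every p ∈ 𝒫 and every h ∈ Λ(Q) the function Ψ_p(h,·) is real-valued and bounded. Then a walk inflow h* ∈ Λ(Q) is a dynamic equilibrium with fixed flow volumes and departure time choice if and only if h* solves the variational inequality VI(Ψ,Q): ⟨Ψ(h*), h − h*⟩ ≥ 0 for all h ∈ Λ(Q). -/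
open MeasureTheory Filter Set

noncomputable section

variable {I P E : Type*}

namespace Stmt2Aux
variable {t0 tf : ℝ}

lemma isFinite (t0 tf : ℝ) : IsFiniteMeasure (horizonMeasure t0 tf) := by
  constructor
  rw [horizonMeasure, Measure.restrict_apply_univ]
  exact measure_Icc_lt_top

lemma ae_mem_Icc (t0 tf : ℝ) : ∀ᵐ t ∂(horizonMeasure t0 tf), t ∈ Icc t0 tf := by
  rw [horizonMeasure]; exact ae_restrict_mem measurableSet_Icc

lemma integrable_of_L2 {f : ℝ → ℝ} (hf : MemLp f 2 (horizonMeasure t0 tf)) :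
    Integrable f (horizonMeasure t0 tf) := by
  haveI := isFinite t0 tf
  exact hf.integrable (by norm_num)

lemma integrable_psi {g : ℝ → ℝ} (hg : Measurable g) {M : ℝ}
    (hM : ∀ t ∈ Icc t0 tf, |g t| ≤ M) : Integrable g (horizonMeasure t0 tf) := by
  haveI := isFinite t0 tf
  refine ⟨hg.aestronglyMeasurable, HasFiniteIntegral.of_bounded (C := M) ?_⟩
  filter_upwards [ae_mem_Icc t0 tf] with t ht
  simpa using hM t ht

lemma integrable_psi_mul {g f : ℝ → ℝ} (hg : Measurable g) {M : ℝ}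
    (hM : ∀ t ∈ Icc t0 tf, |g t| ≤ M) (hf : Integrable f (horizonMeasure t0 tf)) :
    Integrable (fun t => g t * f t) (horizonMeasure t0 tf) := by
  refine Integrable.bdd_mul (c := M) hf hg.aestronglyMeasurable ?_
  filter_upwards [ae_mem_Icc t0 tf] with t ht
  simpa using hM t ht

end Stmt2Aux

open Stmt2Aux in
lemma swap_lemma {I P : Type*} [Fintype I] [Fintype P] [DecidableEq I]
    (t0 tf : ℝ)
    (comm : P → I) (B : P → ℝ) (Q : I → ℝ)
    (Psi : (P → ℝ → ℝ) → P → ℝ → ℝ)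
    (hmeas : ∀ h p, Measurable (Psi h p))
    (hstar : P → ℝ → ℝ)
    (M : P → ℝ) (hM : ∀ p, ∀ t ∈ Icc t0 tf, |Psi hstar p t| ≤ M p)
    (hmem : hstar ∈ LambdaQ t0 tf comm B Q)
    (hVI : ∀ h ∈ LambdaQ t0 tf comm B Q,
      0 ≤ inner2 t0 tf (Psi hstar) (fun p t => h p t - hstar p t))
    (c : ℝ) (p q : P) (hpq : comm p = comm q)
    (hU : ¬ ∀ᵐ t ∂(horizonMeasure t0 tf), ¬(0 < hstar p t ∧ c < Psi hstar p t))
    (hV : ¬ ∀ᵐ t ∂(horizonMeasure t0 tf), ¬(hstar q t < B q ∧ Psi hstar q t < c)) :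
    False := by
  classical
  set μ := horizonMeasure t0 tf with hμ
  haveI : IsFiniteMeasure μ := isFinite t0 tf
  -- turn hU, hV into nonzero measure statements
  have hU' : μ {t | 0 < hstar p t ∧ c < Psi hstar p t} ≠ 0 := by
    intro h0; apply hU; rw [ae_iff]; simpa only [not_not] using h0
  have hV' : μ {t | hstar q t < B q ∧ Psi hstar q t < c} ≠ 0 := by
    intro h0; apply hV; rw [ae_iff]; simpa only [not_not] using h0
  -- quantitative versions
  obtain ⟨⟨n, m⟩, hA⟩ : ∃ nm : ℕ × ℕ,
      μ {t | 1/(nm.1+1:ℝ) ≤ hstar p t ∧ c + 1/(nm.2+1:ℝ) ≤ Psi hstar p t} ≠ 0 := by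
    by_contra hall
    push_neg at hall
    refine hU' (measure_mono_null ?_ (measure_iUnion_null_iff.2 fun nm => hall nm))
    rintro t ⟨h1, h2⟩
    obtain ⟨n, hn⟩ := exists_nat_one_div_lt h1
    obtain ⟨m, hm⟩ := exists_nat_one_div_lt (sub_pos.2 h2)
    exact mem_iUnion.2 ⟨(n, m), le_of_lt hn, by linarith⟩
  obtain ⟨⟨n', m'⟩, hA'⟩ : ∃ nm : ℕ × ℕ,
      μ {t | hstar q t ≤ B q - 1/(nm.1+1:ℝ) ∧ Psi hstar q t ≤ c - 1/(nm.2+1:ℝ)} ≠ 0 := by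
    by_contra hall
    push_neg at hall
    refine hV' (measure_mono_null ?_ (measure_iUnion_null_iff.2 fun nm => hall nm))
    rintro t ⟨h1, h2⟩
    obtain ⟨n, hn⟩ := exists_nat_one_div_lt (sub_pos.2 h1)
    obtain ⟨m, hm⟩ := exists_nat_one_div_lt (sub_pos.2 h2)
    exact mem_iUnion.2 ⟨(n, m), by linarith, by linarith⟩
  set η : ℝ := 1/(n+1) with hη
  set θ : ℝ := 1/(m+1) with hθ
  set η' : ℝ := 1/(n'+1) with hη'
  set θ' : ℝ := 1/(m'+1) with hθ'
  have hηpos : 0 < η := by positivity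
  have hθpos : 0 < θ := by positivity
  have hη'pos : 0 < η' := by positivity
  have hθ'pos : 0 < θ' := by positivity
  -- measurable representatives
  obtain ⟨gp, hgp_m, hgp_ae⟩ : ∃ g, StronglyMeasurable g ∧ hstar p =ᵐ[μ] g :=
    ⟨((hmem.1 p).1).1.mk _, ((hmem.1 p).1).1.stronglyMeasurable_mk, ((hmem.1 p).1).1.ae_eq_mk⟩
  obtain ⟨gq, hgq_m, hgq_ae⟩ : ∃ g, StronglyMeasurable g ∧ hstar q =ᵐ[μ] g :=
    ⟨((hmem.1 q).1).1.mk _, ((hmem.1 q).1).1.stronglyMeasurable_mk, ((hmem.1 q).1).1.ae_eq_mk⟩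
  set U : Set ℝ := Icc t0 tf ∩ ({t | η ≤ gp t} ∩ {t | c + θ ≤ Psi hstar p t}) with hUdef
  set V : Set ℝ := Icc t0 tf ∩ ({t | gq t ≤ B q - η'} ∩ {t | Psi hstar q t ≤ c - θ'}) with hVdef
  have hUmeas : MeasurableSet U :=
    measurableSet_Icc.inter ((measurableSet_le measurable_const hgp_m.measurable).inter
      (measurableSet_le measurable_const (hmeas hstar p)))
  have hVmeas : MeasurableSet V :=
    measurableSet_Icc.inter ((measurableSet_le hgq_m.measurable measurable_const).inter
      (measurableSet_le (hmeas hstar q) measurable_const))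
  have hUne : μ U ≠ 0 := by
    intro h0
    apply hA
    rw [measure_eq_zero_iff_ae_notMem] at h0 ⊢
    filter_upwards [h0, ae_mem_Icc t0 tf, hgp_ae] with t htU htIcc hgt
    rintro ⟨h1, h2⟩
    exact htU ⟨htIcc, show η ≤ gp t from hgt ▸ h1, h2⟩
  have hVne : μ V ≠ 0 := by
    intro h0
    apply hA'
    rw [measure_eq_zero_iff_ae_notMem] at h0 ⊢
    filter_upwards [h0, ae_mem_Icc t0 tf, hgq_ae] with t htV htIcc hgt
    rintro ⟨h1, h2⟩
    exact htV ⟨htIcc, show gq t ≤ B q - η' from hgt ▸ h1, h2⟩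
  set a : ℝ := (μ U).toReal with ha
  set b : ℝ := (μ V).toReal with hb
  have hapos : 0 < a := ENNReal.toReal_pos hUne (measure_ne_top μ U)
  have hbpos : 0 < b := ENNReal.toReal_pos hVne (measure_ne_top μ V)
  set s : ℝ := min (η / b) (η' / a) with hs
  have hspos : 0 < s := lt_min (by positivity) (by positivity)
  set εp : ℝ := s * b with hεp
  set εq : ℝ := s * a with hεq
  have hεppos : 0 < εp := mul_pos hspos hbpos
  have hεqpos : 0 < εq := mul_pos hspos hapos
  have hεple : εp ≤ η := by
    have := min_le_left (η / b) (η' / a)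
    calc εp = s * b := rfl
      _ ≤ (η / b) * b := by nlinarith
      _ = η := div_mul_cancel₀ η (ne_of_gt hbpos)
  have hεqle : εq ≤ η' := by
    have := min_le_right (η / b) (η' / a)
    calc εq = s * a := rfl
      _ ≤ (η' / a) * a := by nlinarith
      _ = η' := div_mul_cancel₀ η' (ne_of_gt hapos)
  have hbal : εp * a = εq * b := by rw [hεp, hεq]; ring
  -- a.e. facts about U and V
  have aeU : ∀ᵐ t ∂μ, t ∈ U → η ≤ hstar p t := by
    filter_upwards [hgp_ae] with t hgt htU
    rw [hgt]; exact htU.2.1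
  have aeV : ∀ᵐ t ∂μ, t ∈ V → hstar q t ≤ B q - η' := by
    filter_upwards [hgq_ae] with t hgt htV
    rw [hgt]; exact htV.2.1
  -- the perturbed inflow
  set hnew : P → ℝ → ℝ := fun w t => hstar w t
      + (if w = q then V.indicator (fun _ => εq) t else 0)
      - (if w = p then U.indicator (fun _ => εp) t else 0) with hhnew
  have hml : ∀ w, MemLp (hnew w) 2 μ := by
    intro w
    apply MemLp.sub
    · apply MemLp.add (hmem.1 w).1
      by_cases hw : w = q
      · simpa only [hw, if_pos] using (memLp_const (p := 2) (μ := μ) εq).indicator hVmeas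
      · simpa only [hw, if_neg, not_false_iff] using memLp_const (p := 2) (μ := μ) (0:ℝ)
    · by_cases hw : w = p
      · simpa only [hw, if_pos] using (memLp_const (p := 2) (μ := μ) εp).indicator hUmeas
      · simpa only [hw, if_neg, not_false_iff] using memLp_const (p := 2) (μ := μ) (0:ℝ)
  have hml2 : ∀ w, 0 ≤ᵐ[μ] hnew w := by
    intro w
    filter_upwards [(hmem.1 w).2, aeU] with t h0 hUt
    have h0' : (0:ℝ) ≤ hstar w t := h0
    have h2 : 0 ≤ (if w = q then V.indicator (fun _ => εq) t else 0) := by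
      split
      · exact Set.indicator_nonneg (fun _ _ => le_of_lt hεqpos) t
      · exact le_refl 0
    have h1 : (if w = p then U.indicator (fun _ => εp) t else 0) ≤ hstar w t := by
      by_cases hwp : w = p
      · rw [if_pos hwp]
        by_cases htU : t ∈ U
        · rw [Set.indicator_of_mem htU]
          exact le_trans hεple (hwp ▸ hUt htU)
        · rw [Set.indicator_of_notMem htU]; exact h0'
      · rw [if_neg hwp]; exact h0'
    have hval : hnew w t = hstar w t + (if w = q then V.indicator (fun _ => εq) t else 0)
        - (if w = p then U.indicator (fun _ => εp) t else 0) := rfl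
    rw [Pi.zero_apply, hval]
    linarith
  have hml3 : ∀ w, ∀ᵐ t ∂μ, hnew w t ≤ B w := by
    intro w
    filter_upwards [hmem.2.2 w, aeV] with t hBw hVt
    have h3 : 0 ≤ (if w = p then U.indicator (fun _ => εp) t else 0) := by
      split
      · exact Set.indicator_nonneg (fun _ _ => le_of_lt hεppos) t
      · exact le_refl 0
    have h1 : hstar w t + (if w = q then V.indicator (fun _ => εq) t else 0) ≤ B w := by
      by_cases hwq : w = q
      · rw [if_pos hwq, hwq]
        by_cases htV : t ∈ V
        · rw [Set.indicator_of_mem htV]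
          have h4 := hVt htV
          linarith [hεqle]
        · rw [Set.indicator_of_notMem htV]
          have h5 : hstar q t ≤ B q := hwq ▸ hBw
          linarith
      · rw [if_neg hwq, add_zero]; exact hBw
    have hval : hnew w t = hstar w t + (if w = q then V.indicator (fun _ => εq) t else 0)
        - (if w = p then U.indicator (fun _ => εp) t else 0) := rfl
    rw [hval]
    linarith
  -- integrability facts
  -- integrability facts
  -- integrability facts
  have hint_star : ∀ w, Integrable (hstar w) μ := fun w => integrable_of_L2 (hmem.1 w).1
  have hintV : Integrable (V.indicator (fun _ => εq)) μ :=
    (integrable_const εq).indicator hVmeas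
  have hintU : Integrable (U.indicator (fun _ => εp)) μ :=
    (integrable_const εp).indicator hUmeas
  -- volume computation
  have e1 : ∫ t, V.indicator (fun _ => εq) t ∂μ = εq * b := by
    rw [integral_indicator_const _ hVmeas, smul_eq_mul, mul_comm]; rfl
  have e2 : ∫ t, U.indicator (fun _ => εp) t ∂μ = εp * a := by
    rw [integral_indicator_const _ hUmeas, smul_eq_mul, mul_comm]; rfl
  have hint : ∀ w, ∫ t, hnew w t ∂μ = ∫ t, hstar w t ∂μ
      + ((if w = q then εq * b else 0) - (if w = p then εp * a else 0)) := by
    intro w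
    by_cases hwq : w = q <;> by_cases hwp : w = p
    · have e : hnew w = fun t => (hstar w t + V.indicator (fun _ => εq) t)
          - U.indicator (fun _ => εp) t := by
        funext t; show _ + _ - _ = _; rw [if_pos hwq, if_pos hwp]
      have iA : Integrable (fun t => hstar w t + V.indicator (fun _ => εq) t) μ :=
        (hint_star w).add hintV
      rw [e, if_pos hwq, if_pos hwp, integral_sub iA hintU,
        integral_add (hint_star w) hintV, e1, e2]
      ring
    · have e : hnew w = fun t => hstar w t + V.indicator (fun _ => εq) t := by
        funext t; show _ + _ - _ = _; rw [if_pos hwq, if_neg hwp, sub_zero]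
      rw [e, if_pos hwq, if_neg hwp, integral_add (hint_star w) hintV, e1]
      ring
    · have e : hnew w = fun t => hstar w t - U.indicator (fun _ => εp) t := by
        funext t; show _ + _ - _ = _; rw [if_neg hwq, if_pos hwp, add_zero]
      rw [e, if_neg hwq, if_pos hwp, integral_sub (hint_star w) hintU, e2]
      ring
    · have e : hnew w = fun t => hstar w t := by
        funext t; show _ + _ - _ = _; rw [if_neg hwq, if_neg hwp, add_zero, sub_zero]
      rw [e, if_neg hwq, if_neg hwp]
      ring
  have hvol : ∀ j, ∑ w ∈ commWalks comm j, ∫ t, hnew w t ∂μ = Q j := by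
    intro j
    have hsum : ∑ w ∈ commWalks comm j, ∫ t, hnew w t ∂μ
        = ∑ w ∈ commWalks comm j, (∫ t, hstar w t ∂μ
          + ((if w = q then εq * b else 0) - (if w = p then εp * a else 0))) :=
      Finset.sum_congr rfl fun w _ => hint w
    rw [hsum, Finset.sum_add_distrib, hmem.2.1 j, Finset.sum_sub_distrib,
      Finset.sum_ite_eq' (commWalks comm j) q (fun _ => εq * b),
      Finset.sum_ite_eq' (commWalks comm j) p (fun _ => εp * a)]
    have hmemq : q ∈ commWalks comm j ↔ comm q = j := by simp [commWalks]
    have hmemp : p ∈ commWalks comm j ↔ comm p = j := by simp [commWalks]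
    by_cases hcj : comm p = j
    · rw [if_pos (hmemq.2 (hpq ▸ hcj)), if_pos (hmemp.2 hcj)]
      linarith [hbal]
    · rw [if_neg (fun hc => hcj (by rw [hpq]; exact hmemq.1 hc)),
        if_neg (fun hc => hcj (hmemp.1 hc))]
      ring
  have hnewmem : hnew ∈ LambdaQ t0 tf comm B Q :=
    ⟨fun w => ⟨hml w, hml2 w⟩, hvol, hml3⟩
  have hVI' := hVI hnew hnewmem
  -- compute the inner product
  have hintPsiV : Integrable (fun t => Psi hstar q t * V.indicator (fun _ => εq) t) μ :=
    integrable_psi_mul (hmeas hstar q) (hM q) hintV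
  have hintPsiU : Integrable (fun t => Psi hstar p t * U.indicator (fun _ => εp) t) μ :=
    integrable_psi_mul (hmeas hstar p) (hM p) hintU
  set IQ : ℝ := ∫ t, Psi hstar q t * V.indicator (fun _ => εq) t ∂μ with hIQ
  set IP : ℝ := ∫ t, Psi hstar p t * U.indicator (fun _ => εp) t ∂μ with hIP
  have hterm : ∀ w, ∫ t, Psi hstar w t * (hnew w t - hstar w t) ∂μ
      = (if w = q then ∫ t, Psi hstar w t * V.indicator (fun _ => εq) t ∂μ else 0)
        - (if w = p then ∫ t, Psi hstar w t * U.indicator (fun _ => εp) t ∂μ else 0) := by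
    intro w
    have hdiff : ∀ t, hnew w t - hstar w t
        = (if w = q then V.indicator (fun _ => εq) t else 0)
          - (if w = p then U.indicator (fun _ => εp) t else 0) := by
      intro t
      show hstar w t + _ - _ - hstar w t = _
      ring
    by_cases hwq : w = q <;> by_cases hwp : w = p
    · have hiV : Integrable (fun t => Psi hstar w t * V.indicator (fun _ => εq) t) μ := by
        rw [hwq]; exact hintPsiV
      have hiU : Integrable (fun t => Psi hstar w t * U.indicator (fun _ => εp) t) μ := by
        rw [hwp]; exact hintPsiU
      have e : (fun t => Psi hstar w t * (hnew w t - hstar w t))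
          = fun t => Psi hstar w t * V.indicator (fun _ => εq) t
            - Psi hstar w t * U.indicator (fun _ => εp) t := by
        funext t; rw [hdiff t, if_pos hwq, if_pos hwp]; ring
      rw [e, if_pos hwq, if_pos hwp, integral_sub hiV hiU]
    · have e : (fun t => Psi hstar w t * (hnew w t - hstar w t))
          = fun t => Psi hstar w t * V.indicator (fun _ => εq) t := by
        funext t; rw [hdiff t, if_pos hwq, if_neg hwp]; ring
      rw [e, if_pos hwq, if_neg hwp, sub_zero]
    · have e : (fun t => Psi hstar w t * (hnew w t - hstar w t))
          = fun t => -(Psi hstar w t * U.indicator (fun _ => εp) t) := by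
        funext t; rw [hdiff t, if_neg hwq, if_pos hwp]; ring
      rw [e, if_neg hwq, if_pos hwp, integral_neg, zero_sub]
    · have e : (fun t => Psi hstar w t * (hnew w t - hstar w t))
          = fun _ => (0:ℝ) := by
        funext t; rw [hdiff t, if_neg hwq, if_neg hwp]; ring
      rw [e, if_neg hwq, if_neg hwp, integral_zero, sub_zero]
  have hinner : inner2 t0 tf (Psi hstar) (fun w t => hnew w t - hstar w t) = IQ - IP := by
    rw [inner2]
    rw [Finset.sum_congr rfl (fun w _ => hterm w), Finset.sum_sub_distrib,
      Finset.sum_ite_eq' Finset.univ q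
        (fun w => ∫ t, Psi hstar w t * V.indicator (fun _ => εq) t ∂μ),
      Finset.sum_ite_eq' Finset.univ p
        (fun w => ∫ t, Psi hstar w t * U.indicator (fun _ => εp) t ∂μ),
      if_pos (Finset.mem_univ q), if_pos (Finset.mem_univ p)]
  -- bounds on IQ and IP
  have hIQval : IQ = εq * ∫ t in V, Psi hstar q t ∂μ := by
    have e : (fun t => Psi hstar q t * V.indicator (fun _ => εq) t)
        = V.indicator (fun t => Psi hstar q t * εq) := by
      funext t
      by_cases htV : t ∈ V
      · rw [Set.indicator_of_mem htV, Set.indicator_of_mem htV]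
      · rw [Set.indicator_of_notMem htV, Set.indicator_of_notMem htV, mul_zero]
    rw [hIQ, e, integral_indicator hVmeas, integral_mul_const, mul_comm]
  have hIPval : IP = εp * ∫ t in U, Psi hstar p t ∂μ := by
    have e : (fun t => Psi hstar p t * U.indicator (fun _ => εp) t)
        = U.indicator (fun t => Psi hstar p t * εp) := by
      funext t
      by_cases htU : t ∈ U
      · rw [Set.indicator_of_mem htU, Set.indicator_of_mem htU]
      · rw [Set.indicator_of_notMem htU, Set.indicator_of_notMem htU, mul_zero]
    rw [hIP, e, integral_indicator hUmeas, integral_mul_const, mul_comm]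
  have hPsiP_int : Integrable (Psi hstar p) μ := integrable_psi (hmeas hstar p) (hM p)
  have hPsiQ_int : Integrable (Psi hstar q) μ := integrable_psi (hmeas hstar q) (hM q)
  have hUbound : (c + θ) * a ≤ ∫ t in U, Psi hstar p t ∂μ := by
    have := setIntegral_ge_of_const_le hUmeas (measure_ne_top μ U)
      (fun x hx => hx.2.2) hPsiP_int.integrableOn
    rw [smul_eq_mul, mul_comm] at this; exact this
  have hVbound : ∫ t in V, Psi hstar q t ∂μ ≤ (c - θ') * b := by
    have h1 : (-(c - θ')) * b ≤ ∫ t in V, -Psi hstar q t ∂μ := by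
      have := setIntegral_ge_of_const_le hVmeas (measure_ne_top μ V)
        (fun x hx => neg_le_neg hx.2.2) hPsiQ_int.neg.integrableOn
      rw [smul_eq_mul, mul_comm] at this; exact this
    rw [integral_neg] at h1
    linarith
  -- final contradiction
  rw [hinner] at hVI'
  have hfin : IQ - IP ≤ εq * ((c - θ') * b) - εp * ((c + θ) * a) := by
    rw [hIQval, hIPval]
    have b1 : εq * ∫ t in V, Psi hstar q t ∂μ ≤ εq * ((c - θ') * b) :=
      mul_le_mul_of_nonneg_left hVbound (le_of_lt hεqpos)
    have b2 : εp * ((c + θ) * a) ≤ εp * ∫ t in U, Psi hstar p t ∂μ :=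
      mul_le_mul_of_nonneg_left hUbound (le_of_lt hεppos)
    linarith
  have hexp : εq * ((c - θ') * b) - εp * ((c + θ) * a)
      = c * (εq * b) - c * (εp * a) - (εq * θ' * b + εp * θ * a) := by ring
  have hneg : εq * ((c - θ') * b) - εp * ((c + θ) * a) < 0 := by
    rw [hexp, hbal]
    have p1 : 0 < εq * θ' * b := by positivity
    have p2 : 0 < εp * θ * a := by positivity
    linarith
  linarith

open Stmt2Aux

theorem stmt2 {I P : Type*} [Fintype I] [Fintype P] [DecidableEq I]
    (t0 tf : ℝ) (ht0 : 0 ≤ t0) (htf : t0 < tf)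
    (comm : P → I) (hcomm : ∀ i, ∃ p, comm p = i)
    (B : P → ℝ) (hB : ∀ p, 0 ≤ B p)
    (Q : I → ℝ) (hQ : ∀ i, 0 ≤ Q i)
    (Psi : (P → ℝ → ℝ) → P → ℝ → ℝ)
    (hmeas : ∀ h p, Measurable (Psi h p))
    (hbd : ∀ h ∈ LambdaQ t0 tf comm B Q, ∀ p, ∃ M, ∀ t ∈ Icc t0 tf, |Psi h p t| ≤ M)
    (hstar : P → ℝ → ℝ) (hmem : hstar ∈ LambdaQ t0 tf comm B Q) :
    IsDEFixedVolume t0 tf comm B Q Psi hstar ↔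
      ∀ h ∈ LambdaQ t0 tf comm B Q,
        0 ≤ inner2 t0 tf (Psi hstar) (fun p t => h p t - hstar p t) := by
  classical
  haveI : IsFiniteMeasure (horizonMeasure t0 tf) := isFinite t0 tf
  set μ := horizonMeasure t0 tf with hμdef
  choose M hM using hbd hstar hmem
  constructor
  · rintro ⟨_, heq⟩ h hh
    rw [inner2, ← Finset.sum_fiberwise Finset.univ comm
      (fun p => ∫ t, Psi hstar p t * (h p t - hstar p t) ∂μ)]
    apply Finset.sum_nonneg
    intro i _
    obtain ⟨ν, hν⟩ := heq i
    have key : ∀ p ∈ commWalks comm i,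
        ν * ((∫ t, h p t ∂μ) - ∫ t, hstar p t ∂μ)
          ≤ ∫ t, Psi hstar p t * (h p t - hstar p t) ∂μ := by
      intro p hp
      have hpi : comm p = i := by simpa [commWalks] using hp
      have hint1 : Integrable (fun t => h p t - hstar p t) μ :=
        (integrable_of_L2 (hh.1 p).1).sub (integrable_of_L2 (hmem.1 p).1)
      have hint2 : Integrable (fun t => Psi hstar p t * (h p t - hstar p t)) μ :=
        integrable_psi_mul (hmeas hstar p) (hM p) hint1
      have hmono : ∀ᵐ t ∂μ, ν * (h p t - hstar p t)
          ≤ Psi hstar p t * (h p t - hstar p t) := by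
        filter_upwards [hν p hpi, (hh.1 p).2, hh.2.2 p, (hmem.1 p).2, hmem.2.2 p]
          with t h1 h2 h3 h4 h5
        have h2' : (0:ℝ) ≤ h p t := h2
        have h4' : (0:ℝ) ≤ hstar p t := h4
        rcases lt_trichotomy (Psi hstar p t) ν with hlt | heq' | hgt
        · have h6 : ¬ hstar p t < B p := fun hc => absurd (h1.2 hc) (not_le.2 hlt)
          push_neg at h6
          nlinarith
        · rw [heq']
        · have h6 : ¬ 0 < hstar p t := fun hc => absurd (h1.1 hc) (not_le.2 hgt)
          push_neg at h6
          nlinarith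
      calc ν * ((∫ t, h p t ∂μ) - ∫ t, hstar p t ∂μ)
          = ∫ t, ν * (h p t - hstar p t) ∂μ := by
            rw [integral_const_mul,
              integral_sub (integrable_of_L2 (hh.1 p).1) (integrable_of_L2 (hmem.1 p).1)]
        _ ≤ ∫ t, Psi hstar p t * (h p t - hstar p t) ∂μ :=
            integral_mono_ae (hint1.const_mul ν) hint2 hmono
    have hchain : (0:ℝ) ≤ ∑ p ∈ commWalks comm i,
        ∫ t, Psi hstar p t * (h p t - hstar p t) ∂μ := by
      calc (0:ℝ) = ν * (Q i - Q i) := by ring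
        _ = ν * ((∑ p ∈ commWalks comm i, ∫ t, h p t ∂μ)
            - ∑ p ∈ commWalks comm i, ∫ t, hstar p t ∂μ) := by
            rw [hh.2.1 i, hmem.2.1 i]
        _ = ∑ p ∈ commWalks comm i, ν * ((∫ t, h p t ∂μ) - ∫ t, hstar p t ∂μ) := by
            rw [← Finset.sum_sub_distrib, Finset.mul_sum]
        _ ≤ _ := Finset.sum_le_sum key
    exact hchain
  · intro hVI
    refine ⟨hmem, fun i => ?_⟩
    obtain ⟨p0, hp0⟩ := hcomm i
    have hne : (Finset.univ : Finset P).Nonempty := ⟨p0, Finset.mem_univ _⟩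
    set M' : ℝ := 1 + Finset.univ.sup' hne (fun w => |M w|) with hM'
    have hM'bound : ∀ w, |M w| ≤ M' - 1 := by
      intro w
      have := Finset.le_sup' (fun w => |M w|) (Finset.mem_univ w)
      rw [hM']; linarith
    have hMM : ∀ w, ∀ t ∈ Icc t0 tf, |Psi hstar w t| < M' := by
      intro w t ht
      have h1 := hM w t ht
      have h2 := le_abs_self (M w)
      have h3 := hM'bound w
      linarith
    have hkey : ∀ c : ℝ, ∀ p' q', comm p' = i → comm q' = i →
        (¬ ∀ᵐ t ∂μ, ¬(0 < hstar p' t ∧ c < Psi hstar p' t)) →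
        ∀ᵐ t ∂μ, ¬(hstar q' t < B q' ∧ Psi hstar q' t < c) := by
      intro c p' q' hpi hqi hup
      by_contra hlo
      exact swap_lemma t0 tf comm B Q Psi hmeas hstar M hM hmem hVI c p' q'
        (hpi.trans hqi.symm) hup hlo
    set T : Set ℝ :=
      {c | ∃ p', comm p' = i ∧ ¬ ∀ᵐ t ∂μ, ¬(0 < hstar p' t ∧ c < Psi hstar p' t)} with hT
    have hTbdd : BddAbove (insert (-M') T) := by
      refine ⟨M', ?_⟩
      rintro c (rfl | ⟨p', hpi, hup⟩)
      · have h0 : (0:ℝ) ≤ |M p0| := abs_nonneg _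
        have := hM'bound p0
        linarith
      · by_contra hc
        push_neg at hc
        apply hup
        filter_upwards [ae_mem_Icc t0 tf] with t ht
        rintro ⟨h1, h2⟩
        have h3 := hMM p' t ht
        have h4 := le_abs_self (Psi hstar p' t)
        linarith
    set ν : ℝ := sSup (insert (-M') T) with hν
    refine ⟨ν, fun p' hpi => ?_⟩
    have hA : ∀ᵐ t ∂μ, ¬(0 < hstar p' t ∧ ν < Psi hstar p' t) := by
      have hunion : {t | 0 < hstar p' t ∧ ν < Psi hstar p' t} ⊆
          ⋃ n : ℕ, {t | 0 < hstar p' t ∧ ν + 1/(n+1:ℝ) < Psi hstar p' t} := by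
        rintro t ⟨h1, h2⟩
        obtain ⟨n, hn⟩ := exists_nat_one_div_lt (sub_pos.2 h2)
        exact mem_iUnion.2 ⟨n, h1, by linarith⟩
      have hnull : ∀ n : ℕ,
          μ {t | 0 < hstar p' t ∧ ν + 1/(n+1:ℝ) < Psi hstar p' t} = 0 := by
        intro n
        rw [measure_eq_zero_iff_ae_notMem]
        by_contra hup
        have hTT : ν + 1/(n+1:ℝ) ∈ T :=
          ⟨p', hpi, fun hae => hup (hae.mono fun t ht => ht)⟩
        have hle : ν + 1/(n+1:ℝ) ≤ ν := le_csSup hTbdd (mem_insert_of_mem _ hTT)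
        have hpos : (0:ℝ) < 1/(n+1:ℝ) := by positivity
        linarith
      rw [ae_iff]
      simp only [not_not]
      exact measure_mono_null hunion (measure_iUnion_null_iff.2 hnull)
    have hBae : ∀ᵐ t ∂μ, ¬(hstar p' t < B p' ∧ Psi hstar p' t < ν) := by
      have hnull : ∀ n : ℕ,
          μ {t | hstar p' t < B p' ∧ Psi hstar p' t < ν - 1/(n+1:ℝ)} = 0 := by
        intro n
        set cn : ℝ := ν - 1/(n+1:ℝ) with hcn
        have hpos : (0:ℝ) < 1/(n+1:ℝ) := by positivity
        have hlt : cn < ν := by rw [hcn]; linarith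
        obtain ⟨x, hx, hcx⟩ := exists_lt_of_lt_csSup (insert_nonempty _ _) hlt
        rw [measure_eq_zero_iff_ae_notMem]
        rcases hx with rfl | hxT
        · filter_upwards [ae_mem_Icc t0 tf] with t ht
          rintro ⟨h1, h2⟩
          have h3 := hMM p' t ht
          have h4 := neg_abs_le (Psi hstar p' t)
          have h5 := abs_nonneg (Psi hstar p' t)
          linarith
        · obtain ⟨q', hqi, hup⟩ := hxT
          have hupc : ¬ ∀ᵐ t ∂μ, ¬(0 < hstar q' t ∧ cn < Psi hstar q' t) := by
            intro hae
            apply hup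
            filter_upwards [hae] with t ht
            rintro ⟨h1, h2⟩
            exact ht ⟨h1, lt_trans hcx h2⟩
          have hres := hkey cn q' p' hqi hpi hupc
          filter_upwards [hres] with t ht
          exact ht
      have hunion : {t | hstar p' t < B p' ∧ Psi hstar p' t < ν} ⊆
          ⋃ n : ℕ, {t | hstar p' t < B p' ∧ Psi hstar p' t < ν - 1/(n+1:ℝ)} := by
        rintro t ⟨h1, h2⟩
        obtain ⟨n, hn⟩ := exists_nat_one_div_lt (sub_pos.2 h2)
        exact mem_iUnion.2 ⟨n, h1, by linarith⟩
      rw [ae_iff]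
      simp only [not_not]
      exact measure_mono_null hunion (measure_iUnion_null_iff.2 hnull)
    filter_upwards [hA, hBae] with t h1 h2
    constructor
    · intro h3
      by_contra h4
      exact h1 ⟨h3, not_le.1 h4⟩
    · intro h3
      by_contra h4
      exact h2 ⟨h3, not_le.1 h4⟩


end
end

section
/- A flow h ∈ S is NOT a side-constrained dynamic equilibrium w.r.t. S and (A_p) if and only if there exist a commodity i ∈ I, walks p,q ∈ 𝒫_i, times t,t' ∈ [t₀,t_f] with Δ := t' − t, and a sequence of functions γ_n ∈ L²₊([t₀,t_f]) such that: (a) the essential supremum of γ_n tends to 0 as n → ∞; (b) lim_n sup{θ ∈ [t₀,t_f] : supp(γ_n) ∩ [t₀,θ] has measure zero} ≥ t and lim_n inf{θ ∈ [t₀,t_f] : supp(γ_n) ∩ [θ,t_f] has measure zero} ≤ t; (c) Ψ_p(h,t) > Ψ_q(h,t'); and (d) ∫_{t₀}^{t_f} γ_n(θ)dθ > 0 and (q,γ_n,Δ) ∈ A_p(h) for every n ∈ ℕ. -/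
open MeasureTheory Filter Set

noncomputable section

variable {I P E : Type*}

theorem stmt5 {I P : Type*} [Fintype I] [Fintype P] [DecidableEq I]
    (t0 tf : ℝ) (ht0 : 0 ≤ t0) (htf : t0 < tf)
    (comm : P → I) (hcomm : ∀ i, ∃ p, comm p = i)
    (B : P → ℝ) (hB : ∀ p, 0 ≤ B p)
    (Q : I → ℝ) (hQ : ∀ i, 0 ≤ Q i)
    (Psi : (P → ℝ → ℝ) → P → ℝ → WithTop ℝ)
    (S : Set (P → ℝ → ℝ)) (hS : S ⊆ LambdaQ t0 tf comm B Q)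
    (A : (P → ℝ → ℝ) → P → Set (P × (ℝ → ℝ) × ℝ))
    (hA : ∀ h ∈ S, ∀ p, ∀ d ∈ A h p, ValidTriple t0 tf comm B h p d.1 d.2.1 d.2.2)
    (h : P → ℝ → ℝ) (hmem : h ∈ S) :
    ¬ IsSCDE t0 tf Psi S A h ↔
      ∃ p q, comm p = comm q ∧
      ∃ t ∈ Icc t0 tf, ∃ t' ∈ Icc t0 tf, ∃ γn : ℕ → ℝ → ℝ,
        (∀ n, L2nonneg t0 tf (γn n)) ∧
        Tendsto (fun n => essSup (γn n) (horizonMeasure t0 tf)) atTop (nhds 0) ∧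
        t ≤ Filter.liminf (fun n =>
          sSup {θ | θ ∈ Icc t0 tf ∧ volume ({s | γn n s ≠ 0} ∩ Icc t0 θ) = 0}) atTop ∧
        Filter.limsup (fun n =>
          sInf {θ | θ ∈ Icc t0 tf ∧ volume ({s | γn n s ≠ 0} ∩ Icc θ tf) = 0}) atTop ≤ t ∧
        Psi h q t' < Psi h p t ∧
        ∀ n, 0 < (∫ s, γn n s ∂(horizonMeasure t0 tf)) ∧
          (q, γn n, t' - t) ∈ A h p := by
  classical
  have hIcc : MeasurableSet (Icc t0 tf) := measurableSet_Icc
  set μ := horizonMeasure t0 tf with hμdef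
  have hμvol : ∀ E : Set ℝ, volume E = 0 → μ E = 0 := fun E hE =>
    le_antisymm (le_trans (Measure.restrict_apply_le _ E) hE.le) zero_le
  have hneb : (ae μ).NeBot := by
    rw [ae_neBot, ← Measure.measure_univ_ne_zero]
    have : μ Set.univ = volume (Icc t0 tf) := by
      rw [hμdef, horizonMeasure, Measure.restrict_apply_univ]
    rw [this, Real.volume_Icc]
    simp only [ne_eq, ENNReal.ofReal_eq_zero, not_le]
    linarith
  have ht0mem : ∀ (g : ℝ → ℝ), t0 ∈ {θ | θ ∈ Icc t0 tf ∧ volume ({s | g s ≠ 0} ∩ Icc t0 θ) = 0} := by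
    intro g
    refine ⟨⟨le_refl _, htf.le⟩, le_antisymm ?_ zero_le⟩
    calc volume ({s | g s ≠ 0} ∩ Icc t0 t0) ≤ volume (Icc t0 t0) :=
          measure_mono inter_subset_right
      _ = 0 := by simp [Real.volume_Icc]
  have htfmem : ∀ (g : ℝ → ℝ), tf ∈ {θ | θ ∈ Icc t0 tf ∧ volume ({s | g s ≠ 0} ∩ Icc θ tf) = 0} := by
    intro g
    refine ⟨⟨htf.le, le_refl _⟩, le_antisymm ?_ zero_le⟩
    calc volume ({s | g s ≠ 0} ∩ Icc tf tf) ≤ volume (Icc tf tf) :=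
          measure_mono inter_subset_right
      _ = 0 := by simp [Real.volume_Icc]
  have hbddA : ∀ (g : ℝ → ℝ), BddAbove {θ | θ ∈ Icc t0 tf ∧ volume ({s | g s ≠ 0} ∩ Icc t0 θ) = 0} :=
    fun g => ⟨tf, fun θ hθ => hθ.1.2⟩
  have hbddB : ∀ (g : ℝ → ℝ), BddBelow {θ | θ ∈ Icc t0 tf ∧ volume ({s | g s ≠ 0} ∩ Icc θ tf) = 0} :=
    fun g => ⟨t0, fun θ hθ => hθ.1.1⟩
  constructor
  · -- forward direction
    intro hnot
    rw [IsSCDE] at hnot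
    push_neg at hnot
    obtain ⟨p, t, ht, q, Δ, hU, hlt⟩ := hnot hmem
    set δ : ℕ → ℝ := fun n => 1 / ((n : ℝ) + 1) with hδdef
    have hδpos : ∀ n, 0 < δ n := fun n => by positivity
    have hδ0 : Tendsto δ atTop (nhds 0) := tendsto_one_div_add_atTop_nhds_zero_nat
    have hγ : ∀ n : ℕ, ∃ γ : ℝ → ℝ,
        L2nonneg t0 tf γ ∧ 0 < (∫ s, γ s ∂μ) ∧
        (∀ᵐ s ∂μ, γ s ≤ δ n) ∧
        (∀ᵐ s ∂μ, γ s ≠ 0 → s ∈ Icc (t - δ n) (t + δ n)) ∧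
        (q, γ, Δ) ∈ A h p := fun n => hU (δ n) (hδpos n) (δ n) (hδpos n)
    choose γn hL2 hint hbound hsupp hAmem using hγ
    have hVT : ∀ n, ValidTriple t0 tf comm B h p q (γn n) Δ := fun n =>
      hA h hmem p _ (hAmem n)
    -- existence of good points
    have hsn : ∀ n, ∃ s, γn n s ≠ 0 ∧ s ∈ Icc (t - δ n) (t + δ n) ∧ s + Δ ∈ Icc t0 tf := by
      intro n
      have hA0 : μ {s | γn n s ≠ 0} ≠ 0 := by
        intro h0
        have hz : γn n =ᵐ[μ] 0 := by
          rw [Filter.EventuallyEq, ae_iff]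
          simpa using h0
        have := integral_eq_zero_of_ae hz
        exact absurd this (hint n).ne'
      set N1 := {s | ¬ (γn n s ≠ 0 → s ∈ Icc (t - δ n) (t + δ n))} with hN1def
      have hN1 : μ N1 = 0 := by
        have := hsupp n; rw [ae_iff] at this; exact this
      set N2 := {s | ¬ (γn n s ≠ 0 → s + Δ ∈ Icc t0 tf)} with hN2def
      have hN2 : μ N2 = 0 := by
        refine hμvol _ ?_
        have hv := (hVT n).2.2.2.2
        rw [ae_iff] at hv
        have heq : N2 = (fun s => s + Δ) ⁻¹' {u | ¬ (γn n (u - Δ) ≠ 0 → u ∈ Icc t0 tf)} := by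
          ext s
          simp [hN2def]
        rw [heq, measure_preimage_add_right]
        exact hv
      have hdpos : μ ({s | γn n s ≠ 0} \ (N1 ∪ N2)) ≠ 0 := by
        rwa [measure_diff_null (measure_union_null hN1 hN2)]
      obtain ⟨s, hs⟩ := nonempty_of_measure_ne_zero hdpos
      have hs1 : γn n s ≠ 0 := hs.1
      have hs2 : s ∉ N1 ∪ N2 := hs.2
      refine ⟨s, hs1, ?_, ?_⟩
      · by_contra hc
        exact hs2 (Or.inl (fun himp => hc (himp hs1)))
      · by_contra hc
        exact hs2 (Or.inr (fun himp => hc (himp hs1)))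
    have ht' : t + Δ ∈ Icc t0 tf := by
      constructor
      · by_contra hc
        push_neg at hc
        obtain ⟨n, hn⟩ := exists_nat_one_div_lt (show (0:ℝ) < t0 - (t + Δ) by linarith)
        obtain ⟨s, _, hsI, hsΔ⟩ := hsn n
        have h1 : s ≤ t + δ n := hsI.2
        have h2 : t0 ≤ s + Δ := hsΔ.1
        have : 1 / ((n : ℝ) + 1) = δ n := rfl
        rw [this] at hn
        linarith
      · by_contra hc
        push_neg at hc
        obtain ⟨n, hn⟩ := exists_nat_one_div_lt (show (0:ℝ) < (t + Δ) - tf by linarith)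
        obtain ⟨s, _, hsI, hsΔ⟩ := hsn n
        have h1 : t - δ n ≤ s := hsI.1
        have h2 : s + Δ ≤ tf := hsΔ.2
        have : 1 / ((n : ℝ) + 1) = δ n := rfl
        rw [this] at hn
        linarith
    refine ⟨p, q, (hVT 0).1.symm, t, ht, t + Δ, ht', γn, hL2, ?_, ?_, ?_, hlt, ?_⟩
    · -- essSup tendsto 0
      have hub : ∀ n, essSup (γn n) μ ≤ δ n := by
        intro n
        have h0 : ∀ᶠ s in ae μ, (0:ℝ) ≤ γn n s := (hL2 n).2.mono (fun s hs => by simpa using hs)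
        have hcb : IsCoboundedUnder (· ≤ ·) (ae μ) (γn n) :=
          IsBoundedUnder.isCoboundedUnder_le ⟨0, eventually_map.mpr h0⟩
        exact limsup_le_of_le hcb (hbound n)
      have hlb : ∀ n, 0 ≤ essSup (γn n) μ := by
        intro n
        have hbd : IsBoundedUnder (· ≤ ·) (ae μ) (γn n) := ⟨δ n, eventually_map.mpr (hbound n)⟩
        exact le_limsup_of_frequently_le ((hL2 n).2.frequently) hbd
      exact tendsto_of_tendsto_of_tendsto_of_le_of_le tendsto_const_nhds hδ0 hlb hub
    · -- liminf
      set θn : ℕ → ℝ := fun n => max t0 (min (t - δ n) tf) with hθdef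
      have hθmem : ∀ n, θn n ∈ {θ | θ ∈ Icc t0 tf ∧ volume ({s | γn n s ≠ 0} ∩ Icc t0 θ) = 0} := by
        intro n
        have hθIcc : θn n ∈ Icc t0 tf := ⟨le_max_left _ _, max_le htf.le (min_le_right _ _)⟩
        refine ⟨hθIcc, le_antisymm ?_ zero_le⟩
        have hsub : {s | γn n s ≠ 0} ∩ Icc t0 (θn n) ⊆
            ({s | ¬ (γn n s ≠ 0 → s ∈ Icc (t - δ n) (t + δ n))} ∩ Icc t0 tf) ∪ {θn n} := by
          rintro s ⟨hs1, hs2⟩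
          have hsIcc : s ∈ Icc t0 tf := ⟨hs2.1, le_trans hs2.2 hθIcc.2⟩
          by_cases hcase : s ∈ Icc (t - δ n) (t + δ n)
          · right
            have hge : θn n ≤ s := max_le hs2.1 (le_trans (min_le_left _ _) hcase.1)
            exact le_antisymm hs2.2 hge
          · exact Or.inl ⟨fun himp => hcase (himp hs1), hsIcc⟩
        have hN1 : volume ({s | ¬ (γn n s ≠ 0 → s ∈ Icc (t - δ n) (t + δ n))} ∩ Icc t0 tf) = 0 := by
          have := hsupp n
          rw [hμdef, horizonMeasure, ae_iff, Measure.restrict_apply_eq_zero' hIcc] at this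
          exact this
        calc volume ({s | γn n s ≠ 0} ∩ Icc t0 (θn n))
            ≤ volume (({s | ¬ (γn n s ≠ 0 → s ∈ Icc (t - δ n) (t + δ n))} ∩ Icc t0 tf) ∪ {θn n}) :=
              measure_mono hsub
          _ ≤ _ + _ := measure_union_le _ _
          _ = 0 := by rw [hN1, Real.volume_singleton, add_zero]
      have hθto : Tendsto θn atTop (nhds t) := by
        have h1 : Tendsto (fun n => t - δ n) atTop (nhds t) := by
          simpa using tendsto_const_nhds.sub hδ0
        have h2 : Tendsto (fun n => min (t - δ n) tf) atTop (nhds (min t tf)) :=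
          h1.min tendsto_const_nhds
        rw [min_eq_left ht.2] at h2
        have h3 : Tendsto θn atTop (nhds (max t0 t)) := tendsto_const_nhds.max h2
        rwa [max_eq_right ht.1] at h3
      have hle : ∀ n, θn n ≤ sSup {θ | θ ∈ Icc t0 tf ∧ volume ({s | γn n s ≠ 0} ∩ Icc t0 θ) = 0} :=
        fun n => le_csSup (hbddA (γn n)) (hθmem n)
      have hSuple : ∀ n, sSup {θ | θ ∈ Icc t0 tf ∧ volume ({s | γn n s ≠ 0} ∩ Icc t0 θ) = 0} ≤ tf :=
        fun n => csSup_le ⟨θn n, hθmem n⟩ (fun θ hθ => hθ.1.2)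
      calc t = Filter.liminf θn atTop := (hθto.liminf_eq).symm
        _ ≤ _ := Filter.liminf_le_liminf (Eventually.of_forall hle)
            (hθto.isBoundedUnder_ge)
            (isCoboundedUnder_ge_of_le atTop hSuple)
    · -- limsup
      set θn : ℕ → ℝ := fun n => min tf (max (t + δ n) t0) with hθdef
      have hθmem : ∀ n, θn n ∈ {θ | θ ∈ Icc t0 tf ∧ volume ({s | γn n s ≠ 0} ∩ Icc θ tf) = 0} := by
        intro n
        have hθIcc : θn n ∈ Icc t0 tf := ⟨le_min htf.le (le_max_right _ _), min_le_left _ _⟩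
        refine ⟨hθIcc, le_antisymm ?_ zero_le⟩
        have hsub : {s | γn n s ≠ 0} ∩ Icc (θn n) tf ⊆
            ({s | ¬ (γn n s ≠ 0 → s ∈ Icc (t - δ n) (t + δ n))} ∩ Icc t0 tf) ∪ {θn n} := by
          rintro s ⟨hs1, hs2⟩
          have hsIcc : s ∈ Icc t0 tf := ⟨le_trans hθIcc.1 hs2.1, hs2.2⟩
          by_cases hcase : s ∈ Icc (t - δ n) (t + δ n)
          · right
            have hge : s ≤ θn n := le_min hs2.2 (le_trans hcase.2 (le_max_left _ _))
            exact le_antisymm hge hs2.1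
          · exact Or.inl ⟨fun himp => hcase (himp hs1), hsIcc⟩
        have hN1 : volume ({s | ¬ (γn n s ≠ 0 → s ∈ Icc (t - δ n) (t + δ n))} ∩ Icc t0 tf) = 0 := by
          have := hsupp n
          rw [hμdef, horizonMeasure, ae_iff, Measure.restrict_apply_eq_zero' hIcc] at this
          exact this
        calc volume ({s | γn n s ≠ 0} ∩ Icc (θn n) tf)
            ≤ volume (({s | ¬ (γn n s ≠ 0 → s ∈ Icc (t - δ n) (t + δ n))} ∩ Icc t0 tf) ∪ {θn n}) :=
              measure_mono hsub
          _ ≤ _ + _ := measure_union_le _ _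
          _ = 0 := by rw [hN1, Real.volume_singleton, add_zero]
      have hθto : Tendsto θn atTop (nhds t) := by
        have h1 : Tendsto (fun n => t + δ n) atTop (nhds t) := by
          simpa using tendsto_const_nhds.add hδ0
        have h2 : Tendsto (fun n => max (t + δ n) t0) atTop (nhds (max t t0)) :=
          h1.max tendsto_const_nhds
        rw [max_eq_left ht.1] at h2
        have h3 : Tendsto θn atTop (nhds (min tf t)) := tendsto_const_nhds.min h2
        rwa [min_eq_right ht.2] at h3
      have hle : ∀ n, sInf {θ | θ ∈ Icc t0 tf ∧ volume ({s | γn n s ≠ 0} ∩ Icc θ tf) = 0} ≤ θn n :=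
        fun n => csInf_le (hbddB (γn n)) (hθmem n)
      have hInfge : ∀ n, t0 ≤ sInf {θ | θ ∈ Icc t0 tf ∧ volume ({s | γn n s ≠ 0} ∩ Icc θ tf) = 0} :=
        fun n => le_csInf ⟨θn n, hθmem n⟩ (fun θ hθ => hθ.1.1)
      calc Filter.limsup (fun n =>
              sInf {θ | θ ∈ Icc t0 tf ∧ volume ({s | γn n s ≠ 0} ∩ Icc θ tf) = 0}) atTop
          ≤ Filter.limsup θn atTop := Filter.limsup_le_limsup (Eventually.of_forall hle)
            (isCoboundedUnder_le_of_le atTop hInfge)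
            (hθto.isBoundedUnder_le)
        _ = t := hθto.limsup_eq
    · intro n
      refine ⟨hint n, ?_⟩
      have : t + Δ - t = Δ := by ring
      rw [this]
      exact hAmem n
  · -- backward direction
    rintro ⟨p, q, hpq, t, ht, t', ht', γn, hL2, hess, hlim1, hlim2, hlt, hAn⟩
    intro hSCDE
    set Δ := t' - t with hΔdef
    have hVT : ∀ n, ValidTriple t0 tf comm B h p q (γn n) Δ := fun n =>
      hA h hmem p _ (hAn n).2
    -- uniform essential bound by B q
    have hBq : ∀ n, ∀ᵐ s ∂μ, γn n s ≤ B q := by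
      intro n
      have hq0 : 0 ≤ᵐ[μ] h q := ((hS hmem).1 q).2
      have hcap : ∀ᵐ u ∂μ, h q u + γn n (u - Δ) ≤ B q := (hVT n).2.2.2.1
      have hres : ∀ᵐ u ∂μ, γn n (u - Δ) ≤ B q := by
        filter_upwards [hq0, hcap] with u h1 h2
        simp only [Pi.zero_apply] at h1
        linarith
      have himp : ∀ᵐ u ∂(volume : Measure ℝ), u ∈ Icc t0 tf → γn n (u - Δ) ≤ B q := by
        rw [hμdef, horizonMeasure] at hres
        exact ae_imp_of_ae_restrict hres
      have hsuppv : ∀ᵐ u ∂(volume : Measure ℝ), γn n (u - Δ) ≠ 0 → u ∈ Icc t0 tf :=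
        (hVT n).2.2.2.2
      have hall : ∀ᵐ u ∂(volume : Measure ℝ), γn n (u - Δ) ≤ B q := by
        filter_upwards [himp, hsuppv] with u h1 h2
        by_cases hz : γn n (u - Δ) = 0
        · rw [hz]; exact hB q
        · exact h1 (h2 hz)
      have hvol : ∀ᵐ s ∂(volume : Measure ℝ), γn n s ≤ B q := by
        rw [ae_iff] at hall ⊢
        have heq : {s | ¬ γn n s ≤ B q} = (fun u => u + Δ) ⁻¹' {u | ¬ γn n (u - Δ) ≤ B q} := by
          ext s
          simp
        rw [heq, measure_preimage_add_right]
        exact hall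
      rw [hμdef, horizonMeasure]
      exact ae_restrict_of_ae hvol
    have hbd : ∀ n, IsBoundedUnder (· ≤ ·) (ae μ) (γn n) := fun n =>
      ⟨B q, eventually_map.mpr (hBq n)⟩
    -- UDev membership
    have hUdev : (q, Δ) ∈ UDev t0 tf A h p t := by
      intro δ hδ ε hε
      have hE1 : ∀ᶠ n in atTop, essSup (γn n) μ < ε := hess.eventually_lt_const hε
      have hE2 : ∀ᶠ n in atTop, t - δ <
          sSup {θ | θ ∈ Icc t0 tf ∧ volume ({s | γn n s ≠ 0} ∩ Icc t0 θ) = 0} := by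
        refine eventually_lt_of_lt_liminf (lt_of_lt_of_le (by linarith) hlim1) ?_
        exact ⟨t0, eventually_map.mpr (Eventually.of_forall fun n =>
          le_csSup (hbddA (γn n)) (ht0mem (γn n)))⟩
      have hE3 : ∀ᶠ n in atTop,
          sInf {θ | θ ∈ Icc t0 tf ∧ volume ({s | γn n s ≠ 0} ∩ Icc θ tf) = 0} < t + δ := by
        refine eventually_lt_of_limsup_lt (lt_of_le_of_lt hlim2 (by linarith)) ?_
        exact ⟨tf, eventually_map.mpr (Eventually.of_forall fun n =>
          csInf_le (hbddB (γn n)) (htfmem (γn n)))⟩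
      obtain ⟨n, h1, h2, h3⟩ := (hE1.and (hE2.and hE3)).exists
      obtain ⟨θ, hθmem, hθgt⟩ := exists_lt_of_lt_csSup ⟨t0, ht0mem (γn n)⟩ h2
      obtain ⟨θ', hθ'mem, hθ'lt⟩ := exists_lt_of_csInf_lt ⟨tf, htfmem (γn n)⟩ h3
      have hE1null : μ ({s | γn n s ≠ 0} ∩ Icc t0 θ) = 0 := hμvol _ hθmem.2
      have hE2null : μ ({s | γn n s ≠ 0} ∩ Icc θ' tf) = 0 := hμvol _ hθ'mem.2
      have hmemIcc : ∀ᵐ s ∂μ, s ∈ Icc t0 tf := by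
        rw [hμdef, horizonMeasure]
        exact ae_restrict_mem hIcc
      refine ⟨γn n, hL2 n, (hAn n).1, ?_, ?_, (hAn n).2⟩
      · filter_upwards [ae_le_essSup (hbd n)] with s hs
        exact le_trans hs h1.le
      · filter_upwards [measure_eq_zero_iff_ae_notMem.mp hE1null,
          measure_eq_zero_iff_ae_notMem.mp hE2null, hmemIcc] with s hs1 hs2 hsIcc hne
        have hgt : θ < s := by
          by_contra hc
          push_neg at hc
          exact hs1 ⟨hne, hsIcc.1, hc⟩
        have hlt' : s < θ' := by
          by_contra hc
          push_neg at hc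
          exact hs2 ⟨hne, hc, hsIcc.2⟩
        exact ⟨le_of_lt (lt_of_lt_of_le hθgt hgt.le), le_of_lt (lt_of_le_of_lt hlt'.le hθ'lt)⟩
    have := hSCDE.2 p t ht q Δ hUdev
    rw [hΔdef] at this
    have heq : t + (t' - t) = t' := by ring
    rw [heq] at this
    exact absurd (lt_of_lt_of_le hlt this) (lt_irrefl _)

end
end

section
/- Let S be a constraint set, let (A_p) and (A'_p) be two correspondences defining admissible γ-deviations, and let h* ∈ S be a feasible flow such that for every walk p ∈ 𝒫: for all (q,γ,Δ) ∈ A_p(h*) with γ ≠ 0 there exists (q,γ',Δ) ∈ A'_p(h*) with γ' ≠ 0 and γ' ≤ γ. If h* is a side-constrained dynamic equilibrium w.r.t. S and (A'_p), then h* is also a side-constrained dynamic equilibrium w.r.t. S and (A_p). -/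
open MeasureTheory Filter Set

noncomputable section

variable {I P E : Type*}

theorem stmt6 {I P : Type*} [Fintype I] [Fintype P] [DecidableEq I]
    (t0 tf : ℝ) (ht0 : 0 ≤ t0) (htf : t0 < tf)
    (comm : P → I) (hcomm : ∀ i, ∃ p, comm p = i)
    (B : P → ℝ) (hB : ∀ p, 0 ≤ B p)
    (Q : I → ℝ) (hQ : ∀ i, 0 ≤ Q i)
    (Psi : (P → ℝ → ℝ) → P → ℝ → WithTop ℝ)
    (S : Set (P → ℝ → ℝ)) (hS : S ⊆ LambdaQ t0 tf comm B Q)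
    (A A' : (P → ℝ → ℝ) → P → Set (P × (ℝ → ℝ) × ℝ))
    (hA : ∀ h ∈ S, ∀ p, ∀ d ∈ A h p, ValidTriple t0 tf comm B h p d.1 d.2.1 d.2.2)
    (hA' : ∀ h ∈ S, ∀ p, ∀ d ∈ A' h p, ValidTriple t0 tf comm B h p d.1 d.2.1 d.2.2)
    (hstar : P → ℝ → ℝ) (hmem : hstar ∈ S)
    (hcond : ∀ p q γ Δ, (q, γ, Δ) ∈ A hstar p →
      ¬ (γ =ᵐ[horizonMeasure t0 tf] (fun _ => (0:ℝ))) →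
      ∃ γ' : ℝ → ℝ, (q, γ', Δ) ∈ A' hstar p ∧
        ¬ (γ' =ᵐ[horizonMeasure t0 tf] (fun _ => (0:ℝ))) ∧
        ∀ᵐ t ∂(horizonMeasure t0 tf), γ' t ≤ γ t) :
    IsSCDE t0 tf Psi S A' hstar → IsSCDE t0 tf Psi S A hstar := by
  rintro ⟨-, heq⟩
  refine ⟨hmem, fun p t ht q Δ hU => heq p t ht q Δ ?_⟩
  intro δ hδ ε hε
  obtain ⟨γ, hL2, hint, hle, hsupp, hmemA⟩ := hU δ hδ ε hε
  have hfin : IsFiniteMeasure (horizonMeasure t0 tf) := by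
    constructor
    rw [horizonMeasure, Measure.restrict_apply_univ, Real.volume_Icc]
    exact ENNReal.ofReal_lt_top
  have hne : ¬ (γ =ᵐ[horizonMeasure t0 tf] (fun _ => (0:ℝ))) := by
    intro h0
    rw [integral_congr_ae h0, integral_zero] at hint
    exact lt_irrefl 0 hint
  obtain ⟨γ', hmemA', hne', hle'⟩ := hcond p q γ Δ hmemA hne
  have hVT := hA' hstar hmem p (q, γ', Δ) hmemA'
  have hL2' : L2nonneg t0 tf γ' := hVT.2.1
  have hinteg : Integrable γ' (horizonMeasure t0 tf) :=
    hL2'.1.integrable (by norm_num)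
  refine ⟨γ', hL2', ?_, ?_, ?_, hmemA'⟩
  · rcases lt_or_eq_of_le (integral_nonneg_of_ae hL2'.2) with h | h
    · exact h
    · exact absurd (((integral_eq_zero_iff_of_nonneg_ae hL2'.2 hinteg).mp h.symm)) hne'
  · filter_upwards [hle', hle] with s h1 h2 using le_trans h1 h2
  · filter_upwards [hle', hL2'.2, hsupp] with s h1 h2 h3 hne0
    exact h3 (lt_of_lt_of_le (h2.lt_of_ne (Ne.symm hne0)) h1).ne'

end
end

section
/- Let 𝒫' ⊆ 𝒫 be a dominating walk set, define A'_p(h) := {(q,γ,Δ) ∈ A_p(h) : q ∈ 𝒫'} and S' := {h ∈ S : h_p = 0 a.e. for all p ∈ 𝒫 ∖ 𝒫'}. Then any h* ∈ S' is a side-constrained dynamic equilibrium w.r.t. S' and (A'_p) if and only if it is a side-constrained dynamic equilibrium w.r.t. S and (A_p). -/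
open MeasureTheory Filter Set

noncomputable section

variable {I P E : Type*}

theorem stmt7 {I P : Type*} [Fintype I] [Fintype P] [DecidableEq I]
    (t0 tf : ℝ) (ht0 : 0 ≤ t0) (htf : t0 < tf)
    (comm : P → I) (hcomm : ∀ i, ∃ p, comm p = i)
    (B : P → ℝ) (hB : ∀ p, 0 ≤ B p)
    (Q : I → ℝ) (hQ : ∀ i, 0 ≤ Q i)
    (Psi : (P → ℝ → ℝ) → P → ℝ → WithTop ℝ)
    (S : Set (P → ℝ → ℝ)) (hS : S ⊆ LambdaQ t0 tf comm B Q)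
    (A : (P → ℝ → ℝ) → P → Set (P × (ℝ → ℝ) × ℝ))
    (hA : ∀ h ∈ S, ∀ p, ∀ d ∈ A h p, ValidTriple t0 tf comm B h p d.1 d.2.1 d.2.2)
    (P' : Set P)
    (hdom : ∀ p, ∀ h ∈ S, ∀ t ∈ Icc t0 tf, ∀ q Δ, (q, Δ) ∈ UDev t0 tf A h p t →
      ∃ q' Δ', (q', Δ') ∈ UDev t0 tf A h p t ∧ q' ∈ P' ∧
        Psi h q' (t + Δ') ≤ Psi h q (t + Δ))
    (hstar : P → ℝ → ℝ)
    (hmem : hstar ∈ S ∧ ∀ p ∉ P', hstar p =ᵐ[horizonMeasure t0 tf] (fun _ => (0:ℝ))) :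
    IsSCDE t0 tf Psi
        {h | h ∈ S ∧ ∀ p ∉ P', h p =ᵐ[horizonMeasure t0 tf] (fun _ => (0:ℝ))}
        (fun h p => {d | d ∈ A h p ∧ d.1 ∈ P'}) hstar ↔
      IsSCDE t0 tf Psi S A hstar := by
  constructor
  · rintro ⟨-, hEq⟩
    refine ⟨hmem.1, fun p t ht q Δ hU => ?_⟩
    obtain ⟨q', Δ', hU', hq', hle⟩ := hdom p hstar hmem.1 t ht q Δ hU
    refine le_trans (hEq p t ht q' Δ' ?_) hle
    intro δ hδ ε hε
    obtain ⟨γ, h1, h2, h3, h4, h5⟩ := hU' δ hδ ε hε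
    exact ⟨γ, h1, h2, h3, h4, h5, hq'⟩
  · rintro ⟨hS', hEq⟩
    refine ⟨⟨hS', hmem.2⟩, fun p t ht q Δ hU => ?_⟩
    refine hEq p t ht q Δ ?_
    intro δ hδ ε hε
    obtain ⟨γ, h1, h2, h3, h4, h5, -⟩ := hU δ hδ ε hε
    exact ⟨γ, h1, h2, h3, h4, h5⟩

end
end

section
/- Let M ∈ ℝ be such that for all h ∈ S, t ∈ [t₀,t_f] and p ∈ 𝒫 with U_p(h,t) ≠ ∅ there exists (q,Δ) ∈ U_p(h,t) with Ψ_q(h,t+Δ) < M. Then a walk inflow h* ∈ S is a side-constrained dynamic equilibrium w.r.t. the effective walk-delay operator Ψ if and only if it is a side-constrained dynamic equilibrium w.r.t. the truncated operator Ψ^M defined by Ψ^M_p(h,t) := min{Ψ_p(h,t), M} (with the same S and (A_p)). -/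
open MeasureTheory Filter Set

noncomputable section

variable {I P E : Type*}

theorem stmt8 {I P : Type*} [Fintype I] [Fintype P] [DecidableEq I]
    (t0 tf : ℝ) (ht0 : 0 ≤ t0) (htf : t0 < tf)
    (comm : P → I) (hcomm : ∀ i, ∃ p, comm p = i)
    (B : P → ℝ) (hB : ∀ p, 0 ≤ B p)
    (Q : I → ℝ) (hQ : ∀ i, 0 ≤ Q i)
    (Psi : (P → ℝ → ℝ) → P → ℝ → WithTop ℝ)
    (S : Set (P → ℝ → ℝ)) (hS : S ⊆ LambdaQ t0 tf comm B Q)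
    (A : (P → ℝ → ℝ) → P → Set (P × (ℝ → ℝ) × ℝ))
    (hA : ∀ h ∈ S, ∀ p, ∀ d ∈ A h p, ValidTriple t0 tf comm B h p d.1 d.2.1 d.2.2)
    (M : ℝ)
    (hM : ∀ h ∈ S, ∀ t ∈ Icc t0 tf, ∀ p, (UDev t0 tf A h p t).Nonempty →
      ∃ q Δ, (q, Δ) ∈ UDev t0 tf A h p t ∧ Psi h q (t + Δ) < (M : WithTop ℝ))
    (hstar : P → ℝ → ℝ) :
    IsSCDE t0 tf Psi S A hstar ↔
      IsSCDE t0 tf (fun h p t => min (Psi h p t) (M : WithTop ℝ)) S A hstar := by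
  constructor
  · rintro ⟨hmem, heq⟩
    exact ⟨hmem, fun p t ht q Δ hqΔ =>
      min_le_min (heq p t ht q Δ hqΔ) le_rfl⟩
  · rintro ⟨hmem, heq⟩
    refine ⟨hmem, fun p t ht q Δ hqΔ => ?_⟩
    obtain ⟨q', Δ', hq'U, hq'M⟩ := hM hstar hmem t ht p ⟨(q, Δ), hqΔ⟩
    have h1 : min (Psi hstar p t) (M : WithTop ℝ) ≤ Psi hstar q' (t + Δ') :=
      (heq p t ht q' Δ' hq'U).trans (min_le_left _ _)
    have h2 : min (Psi hstar p t) (M : WithTop ℝ) < (M : WithTop ℝ) :=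
      h1.trans_lt hq'M
    have h3 : Psi hstar p t < (M : WithTop ℝ) := by
      rcases min_cases (Psi hstar p t) ((M : WithTop ℝ)) with ⟨he, _⟩ | ⟨he, _⟩
      · rwa [he] at h2
      · rw [he] at h2; exact absurd h2 (lt_irrefl _)
    have hmin : min (Psi hstar p t) (M : WithTop ℝ) = Psi hstar p t :=
      min_eq_left h3.le
    calc Psi hstar p t = min (Psi hstar p t) (M : WithTop ℝ) := hmin.symm
      _ ≤ min (Psi hstar q (t + Δ)) (M : WithTop ℝ) := heq p t ht q Δ hqΔ
      _ ≤ Psi hstar q (t + Δ) := min_le_left _ _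

end
end
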